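/- arXiv:1708.02939 — 2 statements merged into one kernel-verified Lean document; each statement's English description precedes it below -/
import Mathlib

section
/- Let {f_t}_{t∈ℕ} be the online gradient descent iterates. If Assumption 1 holds and lim_{t→∞} η_t = 0, then there exist constants Ĉ, γ > 0, independent of t, such that for all t ∈ ℕ: (i) 𝔼[‖f_t − f_H‖²] ≤ Ĉ + γ ∑_{k=1}^t η_k², and (ii) 𝔼[‖∇E(f_t)‖²] ≥ (𝔼[E(f_t)] − E(f_H))² / (Ĉ + γ ∑_{k=1}^t η_k²). -/
open MeasureTheory ProbabilityTheory Filter Real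
open scoped RealInnerProductSpace

/-- Mean value theorem, both orders. -/
lemma omb_mvt {g g' : ℝ → ℝ} (hd : ∀ s, HasDerivAt g (g' s) s) {a b : ℝ} (hab : a ≠ b) :
    ∃ c, |c - a| ≤ |b - a| ∧ g b - g a = g' c * (b - a) := by
  have hcont : ∀ u v : ℝ, ContinuousOn g (Set.Icc u v) :=
    fun u v => (HasDerivAt.continuousOn (fun x _ => hd x))
  rcases lt_or_gt_of_ne hab with h | h
  · obtain ⟨c, hc, hceq⟩ := exists_hasDerivAt_eq_slope g g' h (hcont a b)
      (fun x _ => hd x)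
    refine ⟨c, ?_, ?_⟩
    · rw [abs_of_pos (sub_pos.mpr hc.1), abs_of_pos (sub_pos.mpr h)]
      linarith [hc.2]
    · rw [eq_div_iff (sub_ne_zero.mpr h.ne')] at hceq
      exact hceq.symm
  · obtain ⟨c, hc, hceq⟩ := exists_hasDerivAt_eq_slope g g' h (hcont b a)
      (fun x _ => hd x)
    refine ⟨c, ?_, ?_⟩
    · rw [abs_of_neg (sub_neg.mpr hc.2), abs_of_neg (sub_neg.mpr h)]
      linarith [hc.1]
    · rw [eq_div_iff (sub_ne_zero.mpr h.ne')] at hceq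
      linear_combination hceq

/-- Taylor-type bound for Hölder-continuous derivative. -/
lemma omb_taylor {g g' : ℝ → ℝ} {L α : ℝ} (hL : 0 ≤ L) (hα : α ∈ Set.Ioc (0:ℝ) 1)
    (hd : ∀ s, HasDerivAt g (g' s) s)
    (hH : ∀ s t : ℝ, |g' s - g' t| ≤ L * |s - t| ^ α) (a b : ℝ) :
    g b ≤ g a + g' a * (b - a) + L * |b - a| ^ α * |b - a| := by
  rcases eq_or_ne a b with rfl | hab
  · simp
  obtain ⟨c, hc1, hc2⟩ := omb_mvt hd hab
  have h1 : |g' c - g' a| ≤ L * |b - a| ^ α := by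
    refine (hH c a).trans ?_
    exact mul_le_mul_of_nonneg_left (Real.rpow_le_rpow (abs_nonneg _) hc1 hα.1.le) hL
  have h2 : (g' c - g' a) * (b - a) ≤ L * |b - a| ^ α * |b - a| := by
    calc (g' c - g' a) * (b - a) ≤ |(g' c - g' a) * (b - a)| := le_abs_self _
    _ = |g' c - g' a| * |b - a| := abs_mul _ _
    _ ≤ L * |b - a| ^ α * |b - a| := by
        exact mul_le_mul_of_nonneg_right h1 (abs_nonneg _)
  nlinarith [hc2]

/-- key gradient product bound from nonnegativity. -/
lemma omb_grad_mul {g g' : ℝ → ℝ} {L α : ℝ} (hL : 0 ≤ L) (hα : α ∈ Set.Ioc (0:ℝ) 1)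
    (hg0 : ∀ s, 0 ≤ g s) (hd : ∀ s, HasDerivAt g (g' s) s)
    (hH : ∀ s t : ℝ, |g' s - g' t| ≤ L * |s - t| ^ α) (s : ℝ) {r : ℝ} (hr : 0 ≤ r) :
    |g' s| * r ≤ g s + L * r ^ α * r := by
  set u : ℝ := -r * (if 0 ≤ g' s then 1 else -1) with hu
  have habs : |u| = r := by
    rcases le_or_gt 0 (g' s) with h | h
    · rw [hu, if_pos h]; simp [abs_of_nonneg hr]
    · rw [hu, if_neg (not_le.mpr h)]; simp [abs_of_nonneg hr]
  have hmul : g' s * u = -(|g' s| * r) := by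
    rcases le_or_gt 0 (g' s) with h | h
    · rw [hu, if_pos h, abs_of_nonneg h]; ring
    · rw [hu, if_neg (not_le.mpr h), abs_of_neg h]; ring
  have := omb_taylor hL hα hd hH s (s + u)
  have h0 := hg0 (s + u)
  simp only [add_sub_cancel_left] at this
  rw [habs] at this
  nlinarith [this, h0, hmul]

/-- square of derivative controlled by function value. -/
lemma omb_grad_sq {g g' : ℝ → ℝ} {L α : ℝ} (hL : 0 < L) (hα : α ∈ Set.Ioc (0:ℝ) 1)
    (hg0 : ∀ s, 0 ≤ g s) (hd : ∀ s, HasDerivAt g (g' s) s)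
    (hH : ∀ s t : ℝ, |g' s - g' t| ≤ L * |s - t| ^ α) (s : ℝ) :
    (g' s) ^ 2 ≤ 4 * L ^ 2 + 4 * L * g s := by
  rcases le_or_gt (|g' s|) (2 * L) with h | h
  · have h2 : (g' s)^2 ≤ (2*L)^2 := by
      rw [← sq_abs]; exact pow_le_pow_left₀ (abs_nonneg _) h 2
    nlinarith [hg0 s, hL.le]
  · set r : ℝ := (|g' s| / (2 * L)) ^ (1/α : ℝ) with hrdef
    have hbase : (1:ℝ) ≤ |g' s| / (2 * L) := by
      rw [le_div_iff₀ (by linarith)]; linarith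
    have h1α : (0:ℝ) < 1/α := by
      rw [one_div]; exact inv_pos.mpr hα.1
    have hr1 : (1:ℝ) ≤ r := Real.one_le_rpow hbase h1α.le
    have hrα : r ^ α = |g' s| / (2 * L) := by
      rw [hrdef, ← Real.rpow_mul (div_nonneg (abs_nonneg _) (by linarith)),
        one_div, inv_mul_cancel₀ (ne_of_gt hα.1), Real.rpow_one]
    have hrr : r ^ α ≤ r := by
      calc r ^ α ≤ r ^ (1:ℝ) := Real.rpow_le_rpow_of_exponent_le hr1 hα.2
      _ = r := Real.rpow_one r
    have hkey := omb_grad_mul hL.le hα hg0 hd hH s (le_trans zero_le_one hr1)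
    rw [hrα] at hkey
    -- |g'| r ≤ g s + L (|g'|/(2L)) r = g s + |g'| r / 2
    have h2 : |g' s| * r ≤ 2 * g s := by
      have : L * (|g' s| / (2*L)) = |g' s| / 2 := by field_simp
      nlinarith [hkey]
    have h3 : |g' s| ≤ 2 * L * r := by
      calc |g' s| = 2 * L * (r ^ α) := by rw [hrα]; field_simp
      _ ≤ 2 * L * r := by nlinarith [hrr]
    have h4 : (g' s)^2 ≤ 4 * L * g s := by
      calc (g' s)^2 = |g' s| * |g' s| := by rw [← sq_abs]; ring
      _ ≤ (2 * L * r) * |g' s| := by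
          exact mul_le_mul_of_nonneg_right h3 (abs_nonneg _)
      _ = 2 * L * (|g' s| * r) := by ring
      _ ≤ 2 * L * (2 * g s) := by nlinarith [h2, hL.le]
      _ = 4 * L * g s := by ring
    nlinarith [hL]

/-- tangent line lies below a convex differentiable function. -/
lemma omb_tangent {g g' : ℝ → ℝ} (hconv : ConvexOn ℝ Set.univ g)
    (hd : ∀ s, HasDerivAt g (g' s) s) (a b : ℝ) :
    g a + g' a * (b - a) ≤ g b := by
  rcases lt_trichotomy a b with h | rfl | h
  · have := hconv.le_slope_of_hasDerivAt (Set.mem_univ a) (Set.mem_univ b) h (hd a)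
    rw [slope_def_field] at this
    have hba : 0 < b - a := sub_pos.mpr h
    rw [le_div_iff₀ hba] at this
    linarith
  · simp
  · have := hconv.slope_le_of_hasDerivAt (Set.mem_univ b) (Set.mem_univ a) h (hd a)
    rw [slope_def_field, div_le_iff₀ (sub_pos.mpr h)] at this
    linarith [this, (by ring : g' a * (a - b) = -(g' a * (b - a)))]

lemma omb_indep_integral {Ω A B : Type*} [MeasurableSpace Ω] [MeasurableSpace A] [MeasurableSpace B]
    (P : Measure Ω) [IsProbabilityMeasure P] (ρ : Measure B) [IsProbabilityMeasure ρ]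
    {W : Ω → A} {V : Ω → B} (hW : Measurable W) (hV : Measurable V)
    (hind : IndepFun W V P) (hVρ : P.map V = ρ)
    {G : A → B → ℝ} (hG : Measurable fun p : A × B => G p.1 p.2)
    {s : Set A} (hs : MeasurableSet s) (hWs : ∀ ω, W ω ∈ s)
    {Bd : ℝ} (hGB : ∀ a ∈ s, ∀ b, |G a b| ≤ Bd) :
    ∫ ω, G (W ω) (V ω) ∂P = ∫ ω, ∫ b, G (W ω) b ∂ρ ∂P := by
  have hmap : P.map (fun ω => (W ω, V ω)) = (P.map W).prod ρ := by
    rw [← hVρ]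
    exact (indepFun_iff_map_prod_eq_prod_map_map hW.aemeasurable hV.aemeasurable).mp hind
  haveI : IsProbabilityMeasure (P.map W) := Measure.isProbabilityMeasure_map hW.aemeasurable
  have h0 : (P.map W) sᶜ = 0 := by
    rw [Measure.map_apply hW hs.compl]
    have : W ⁻¹' sᶜ = ∅ := by
      ext ω; simp [hWs ω]
    simp [this]
  have haeprod : ∀ᵐ p ∂((P.map W).prod ρ), p.1 ∈ s := by
    have hset : {p : A × B | p.1 ∉ s} = sᶜ ×ˢ Set.univ := by ext p; simp
    rw [ae_iff]
    show ((P.map W).prod ρ) {p | p.1 ∉ s} = 0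
    rw [hset, Measure.prod_prod, h0, zero_mul]
  have hint : Integrable (fun p : A × B => G p.1 p.2) ((P.map W).prod ρ) := by
    refine Integrable.mono' (integrable_const Bd) hG.aestronglyMeasurable ?_
    filter_upwards [haeprod] with p hp
    rw [Real.norm_eq_abs]
    exact hGB _ hp _
  calc ∫ ω, G (W ω) (V ω) ∂P
      = ∫ p : A × B, G p.1 p.2 ∂(P.map (fun ω => (W ω, V ω))) :=
        (integral_map (hW.prodMk hV).aemeasurable (by rw [hmap]; exact hG.aestronglyMeasurable)).symm
    _ = ∫ p : A × B, G p.1 p.2 ∂((P.map W).prod ρ) := by rw [hmap]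
    _ = ∫ a, ∫ b, G a b ∂ρ ∂(P.map W) := integral_prod _ hint
    _ = ∫ ω, ∫ b, G (W ω) b ∂ρ ∂P := by
        exact integral_map hW.aemeasurable
          (hG.stronglyMeasurable.integral_prod_right').aestronglyMeasurable

/-- deterministic recursion functional for the online gradient descent iterates. -/
def ombF {Z Hs : Type*} [NormedAddCommGroup Hs] [InnerProductSpace ℝ Hs]
    (η : ℕ → ℝ) (φ' : ℝ → ℝ → ℝ) (K : Z → Hs) (yc : Z → ℝ) : ℕ → (ℕ → Z) → Hs
  | 0 => fun _ => 0
  | (n+1) => fun w =>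
      if n = 0 then 0 else
        ombF η φ' K yc n w
          - (η n * φ' (yc (w n)) ⟪ombF η φ' K yc n w, K (w n)⟫) • K (w n)

lemma ombF_one {Z Hs : Type*} [NormedAddCommGroup Hs] [InnerProductSpace ℝ Hs]
    (η : ℕ → ℝ) (φ' : ℝ → ℝ → ℝ) (K : Z → Hs) (yc : Z → ℝ) (w : ℕ → Z) :
    ombF η φ' K yc 1 w = 0 := by simp [ombF]

lemma ombF_succ {Z Hs : Type*} [NormedAddCommGroup Hs] [InnerProductSpace ℝ Hs]
    (η : ℕ → ℝ) (φ' : ℝ → ℝ → ℝ) (K : Z → Hs) (yc : Z → ℝ) {n : ℕ} (hn : n ≠ 0) (w : ℕ → Z) :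
    ombF η φ' K yc (n+1) w = ombF η φ' K yc n w
      - (η n * φ' (yc (w n)) ⟪ombF η φ' K yc n w, K (w n)⟫) • K (w n) := by
  simp only [ombF]
  rw [if_neg hn]

lemma ombF_congr {Z Hs : Type*} [NormedAddCommGroup Hs] [InnerProductSpace ℝ Hs]
    (η : ℕ → ℝ) (φ' : ℝ → ℝ → ℝ) (K : Z → Hs) (yc : Z → ℝ) (t : ℕ) (w w' : ℕ → Z)
    (h : ∀ k, 1 ≤ k → k < t → w k = w' k) :
    ombF η φ' K yc t w = ombF η φ' K yc t w' := by
  induction t with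
  | zero => simp [ombF]
  | succ n ih =>
    by_cases hn : n = 0
    · subst hn; simp [ombF]
    · rw [ombF_succ _ _ _ _ hn, ombF_succ _ _ _ _ hn]
      have h1 : ombF η φ' K yc n w = ombF η φ' K yc n w' :=
        ih (fun k hk1 hk2 => h k hk1 (by omega))
      have h2 : w n = w' n := h n (by omega) (by omega)
      rw [h1, h2]

lemma ombF_measurable {Z Hs : Type*} [NormedAddCommGroup Hs] [InnerProductSpace ℝ Hs]
    [MeasurableSpace Z] [MeasurableSpace Hs] [BorelSpace Hs] [SecondCountableTopology Hs]
    (η : ℕ → ℝ) {φ' : ℝ → ℝ → ℝ} {K : Z → Hs} {yc : Z → ℝ}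
    (hK : Measurable K) (hyc : Measurable yc)
    (hφ' : Measurable fun p : ℝ × ℝ => φ' p.1 p.2) (t : ℕ) :
    Measurable (ombF η φ' K yc t) := by
  induction t with
  | zero =>
    have : ombF η φ' K yc 0 = fun _ => (0 : Hs) := rfl
    rw [this]; exact measurable_const
  | succ n ih =>
    by_cases hn : n = 0
    · subst hn
      have : ombF η φ' K yc 1 = fun _ => (0 : Hs) := funext (ombF_one η φ' K yc)
      rw [this]; exact measurable_const
    · have heq : ombF η φ' K yc (n+1) = fun w => ombF η φ' K yc n w
          - (η n * φ' (yc (w n)) ⟪ombF η φ' K yc n w, K (w n)⟫) • K (w n) :=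
        funext (ombF_succ η φ' K yc hn)
      rw [heq]
      have hw : Measurable fun w : ℕ → Z => w n := measurable_pi_apply n
      exact ih.sub ((measurable_const.mul (hφ'.comp ((hyc.comp hw).prodMk
        (ih.inner (hK.comp hw))))).smul (hK.comp hw))
set_option maxHeartbeats 1000000 in
/-- Lemma 4 (moment bounds for the iterates): if `η_t → 0`, there are constants `Ĉ, γ > 0`
such that `𝔼‖f_t - f_H‖² ≤ Ĉ + γ ∑_{k≤t} η_k²` and
`𝔼‖∇E(f_t)‖² ≥ (𝔼[E(f_t)] - E(f_H))² / (Ĉ + γ ∑_{k≤t} η_k²)` for all `t`. -/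
theorem iterate_moment_bounds_in_expectation
    {X : Type*} [MeasurableSpace X] {Y : Set ℝ}
    {H : Type*} [NormedAddCommGroup H] [InnerProductSpace ℝ H] [CompleteSpace H]
    [MeasurableSpace H] [BorelSpace H] [SecondCountableTopology H]
    (K : X → H) (hKmeas : Measurable K)
    (κ : ℝ) (hκ : ∀ x : X, ‖K x‖ ≤ κ)
    (L α : ℝ) (hL : 0 < L) (hα : α ∈ Set.Ioc (0 : ℝ) 1)
    (φ φ' : ℝ → ℝ → ℝ)
    (hφmeas : Measurable fun p : ℝ × ℝ => φ p.1 p.2)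
    (hφ'meas : Measurable fun p : ℝ × ℝ => φ' p.1 p.2)
    (hφnonneg : ∀ y ∈ Y, ∀ s : ℝ, 0 ≤ φ y s)
    (hφconv : ∀ y ∈ Y, ConvexOn ℝ Set.univ (φ y))
    (hφderiv : ∀ y ∈ Y, ∀ s : ℝ, HasDerivAt (φ y) (φ' y s) s)
    (hφholder : ∀ y ∈ Y, ∀ s t : ℝ, |φ' y s - φ' y t| ≤ L * |s - t| ^ α)
    (ρ : Measure (X × Y)) [IsProbabilityMeasure ρ]
    (E : H → ℝ) (hE : E = fun g : H => ∫ z : X × Y, φ (z.2 : ℝ) ⟪g, K z.1⟫ ∂ρ)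
    (hEint : ∀ g : H, Integrable (fun z : X × Y => φ (z.2 : ℝ) ⟪g, K z.1⟫) ρ)
    (hgint : ∀ g : H, Integrable (fun z : X × Y => φ' (z.2 : ℝ) ⟪g, K z.1⟫ • K z.1) ρ)
    (fH : H) (hmin : ∀ g : H, E fH ≤ E g)
    (hgradH : (∫ z : X × Y, φ' (z.2 : ℝ) ⟪fH, K z.1⟫ • K z.1 ∂ρ) = 0)
    (M0 MH : ℝ) (hM0 : ∀ z : X × Y, φ (z.2 : ℝ) 0 ≤ M0)
    (hMH : ∀ z : X × Y, φ (z.2 : ℝ) ⟪fH, K z.1⟫ ≤ MH)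
    {Ω : Type*} [MeasurableSpace Ω] (P : Measure Ω) [IsProbabilityMeasure P]
    (zs : ℕ → Ω → X × Y) (hzmeas : ∀ t, Measurable (zs t))
    (hzdist : ∀ t, Measure.map (zs t) P = ρ)
    (hziid : iIndepFun zs P)
    (η : ℕ → ℝ) (hηpos : ∀ t, 0 < η t)
    (f : ℕ → Ω → H) (hf1 : ∀ ω : Ω, f 1 ω = 0)
    (hfrec : ∀ t, 1 ≤ t → ∀ ω : Ω,
      f (t + 1) ω = f t ω - (η t * φ' (((zs t ω).2 : Y) : ℝ) ⟪f t ω, K (zs t ω).1⟫) • K (zs t ω).1)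
    (hη0 : Tendsto η atTop (nhds 0)) :
    ∃ C γ : ℝ, 0 < C ∧ 0 < γ ∧ ∀ t : ℕ, 1 ≤ t →
      (∫ ω, ‖f t ω - fH‖ ^ 2 ∂P) ≤ C + γ * ∑ k ∈ Finset.Icc 1 t, η k ^ 2 ∧
        ((∫ ω, E (f t ω) ∂P) - E fH) ^ 2 / (C + γ * ∑ k ∈ Finset.Icc 1 t, η k ^ 2)
          ≤ ∫ ω, ‖∫ z : X × Y, φ' (z.2 : ℝ) ⟪f t ω, K z.1⟫ • K z.1 ∂ρ‖ ^ 2 ∂P := by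
  classical
  obtain ⟨z₀⟩ : Nonempty (X × Y) := by
    by_contra h
    rw [not_nonempty_iff] at h
    have h1 := measure_univ (μ := ρ)
    rw [Set.univ_eq_empty_iff.mpr h, measure_empty] at h1
    exact zero_ne_one h1
  have hκ0 : 0 ≤ κ := le_trans (norm_nonneg _) (hκ z₀.1)
  have hα0 := hα.1
  have hα1 := hα.2
  have hM0' : 0 ≤ M0 := le_trans (hφnonneg _ z₀.2.2 0) (hM0 z₀)
  have hEeq : ∀ h : H, E h = ∫ z : X × Y, φ (z.2 : ℝ) ⟪h, K z.1⟫ ∂ρ := fun h => by rw [hE]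
  have hsq : ∀ (y : Y) (s : ℝ), (φ' (y:ℝ) s)^2 ≤ 4*L^2 + 4*L*φ (y:ℝ) s :=
    fun y s => omb_grad_sq hL hα (hφnonneg _ y.2) (hφderiv _ y.2) (hφholder _ y.2) s
  have htan : ∀ (y : Y) (b c : ℝ), φ (y:ℝ) b + φ' (y:ℝ) b * (c - b) ≤ φ (y:ℝ) c :=
    fun y b c => omb_tangent (hφconv _ y.2) (hφderiv _ y.2) b c
  have hφ'0 : ∀ y : Y, |φ' (y:ℝ) 0| ≤ M0 + L := by
    intro y
    have h1 := omb_grad_mul hL.le hα (hφnonneg _ y.2) (hφderiv _ y.2) (hφholder _ y.2) 0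
      (zero_le_one)
    rw [Real.one_rpow, mul_one, mul_one, mul_one] at h1
    have h2 := hM0 (z₀.1, y)
    simp only at h2
    linarith
  have habs_s : ∀ s : ℝ, |s| ^ α ≤ 1 + |s| := by
    intro s
    rcases le_or_gt (|s|) 1 with h | h
    · have := Real.rpow_le_one (abs_nonneg s) h hα0.le
      linarith [abs_nonneg s]
    · have := Real.rpow_le_rpow_of_exponent_le h.le hα1
      rw [Real.rpow_one] at this
      linarith [abs_nonneg s]
  have hφ'abs : ∀ (y : Y) (s : ℝ), |φ' (y:ℝ) s| ≤ M0 + 2*L + L*|s| := by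
    intro y s
    have h1 : |φ' (y:ℝ) s - φ' (y:ℝ) 0| ≤ L * |s| ^ α := by
      simpa using hφholder _ y.2 s 0
    have h2 := habs_s s
    have h3 := hφ'0 y
    have h4 : |φ' (y:ℝ) s| ≤ |φ' (y:ℝ) 0| + |φ' (y:ℝ) s - φ' (y:ℝ) 0| := by
      calc |φ' (y:ℝ) s| = |φ' (y:ℝ) 0 + (φ' (y:ℝ) s - φ' (y:ℝ) 0)| := by ring_nf
      _ ≤ |φ' (y:ℝ) 0| + |φ' (y:ℝ) s - φ' (y:ℝ) 0| := abs_add_le _ _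
    nlinarith [mul_le_mul_of_nonneg_left h2 hL.le]
  have hφ'absB : ∀ (y : Y) (s c : ℝ), |s| ≤ c → |φ' (y:ℝ) s| ≤ M0 + 2*L + L*c := by
    intro y s c hc
    have := hφ'abs y s
    nlinarith [hL.le]
  have hφub : ∀ (y : Y) (s c : ℝ), |s| ≤ c → 0 ≤ c →
      φ (y:ℝ) s ≤ M0 + (M0+L)*c + L*(1+c)*c := by
    intro y s c hc hc0
    have h1 := omb_taylor hL.le hα (hφderiv _ y.2) (hφholder _ y.2) 0 s
    simp only [sub_zero, zero_add] at h1
    have h2 := hM0 (z₀.1, y)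
    simp only at h2
    have h3 := hφ'0 y
    have h4 : φ' (y:ℝ) 0 * s ≤ (M0+L)*c := by
      calc φ' (y:ℝ) 0 * s ≤ |φ' (y:ℝ) 0 * s| := le_abs_self _
      _ = |φ' (y:ℝ) 0| * |s| := abs_mul _ _
      _ ≤ (M0+L)*c := by nlinarith [abs_nonneg (φ' (y:ℝ) 0), abs_nonneg s]
    have h5 : L * |s| ^ α * |s| ≤ L*(1+c)*c := by
      have h6 := habs_s s
      have h7 : |s| ^ α ≤ 1 + c := by linarith
      have h8 : (0:ℝ) ≤ |s| ^ α := Real.rpow_nonneg (abs_nonneg s) α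
      nlinarith [mul_le_mul h7 hc (abs_nonneg s) (by linarith : (0:ℝ) ≤ 1+c), hL.le]
    linarith
  -- measurability basics
  have hKz : Measurable fun z : X × Y => K z.1 := hKmeas.comp measurable_fst
  have hyz : Measurable fun z : X × Y => (z.2 : ℝ) :=
    measurable_subtype_coe.comp measurable_snd
  have hinm : Measurable fun p : H × (X × Y) => ⟪p.1, K p.2.1⟫ :=
    measurable_fst.inner (hKz.comp measurable_snd)
  have hG1m : Measurable fun p : H × (X × Y) => φ' (p.2.2:ℝ) ⟪p.1, K p.2.1⟫ :=
    hφ'meas.comp ((hyz.comp measurable_snd).prodMk hinm)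
  have hG3m : Measurable fun p : H × (X × Y) => φ (p.2.2:ℝ) ⟪p.1, K p.2.1⟫ :=
    hφmeas.comp ((hyz.comp measurable_snd).prodMk hinm)
  have hEmeas : Measurable E := by
    rw [hE]
    exact hG3m.stronglyMeasurable.integral_prod_right'.measurable
  have hΦm : Measurable fun p : H × (X × Y) => φ' (p.2.2:ℝ) ⟪p.1, K p.2.1⟫ • K p.2.1 :=
    hG1m.smul (hKz.comp measurable_snd)
  have hΦmeas : Measurable fun h : H => ∫ z : X × Y, φ' (z.2:ℝ) ⟪h, K z.1⟫ • K z.1 ∂ρ :=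
    hΦm.stronglyMeasurable.integral_prod_right'.measurable
  set Φ : H → H := fun h => ∫ z : X × Y, φ' (z.2:ℝ) ⟪h, K z.1⟫ • K z.1 ∂ρ with hΦdef
  have hΦnorm : ∀ h : H, ‖Φ h‖ ≤ κ * (M0 + 2*L + L*(κ*‖h‖)) := by
    intro h
    rw [hΦdef]
    have hnn : (0:ℝ) ≤ M0 + 2*L + L*(κ*‖h‖) := by
      nlinarith [mul_nonneg hL.le (mul_nonneg hκ0 (norm_nonneg h))]
    have hint : Integrable (fun _z : X × Y => (M0 + 2*L + L*(κ*‖h‖)) * κ) ρ := integrable_const _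
    refine (norm_integral_le_of_norm_le hint (ae_of_all _ fun z => ?_)).trans ?_
    · rw [norm_smul, Real.norm_eq_abs]
      have h1 : |⟪h, K z.1⟫| ≤ κ * ‖h‖ := by
        calc |⟪h, K z.1⟫| ≤ ‖h‖ * ‖K z.1‖ := abs_real_inner_le_norm _ _
        _ ≤ κ * ‖h‖ := by nlinarith [norm_nonneg h, hκ z.1, norm_nonneg (K z.1)]
      have h2 := hφ'absB z.2 _ _ h1
      exact mul_le_mul h2 (hκ z.1) (norm_nonneg _) hnn
    · rw [integral_const, probReal_univ, one_smul, mul_comm]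
  have hEnonneg : ∀ h : H, 0 ≤ E h := by
    intro h; rw [hEeq]
    exact integral_nonneg (fun z => hφnonneg _ z.2.2 _)
  have hEfH : E fH ≤ MH := by
    rw [hEeq]
    calc (∫ z : X × Y, φ (z.2:ℝ) ⟪fH, K z.1⟫ ∂ρ) ≤ ∫ _z : X × Y, MH ∂ρ :=
      integral_mono (hEint fH) (integrable_const MH) (fun z => hMH z)
    _ = MH := by simp
  have hMH0 : 0 ≤ MH := le_trans (hEnonneg fH) hEfH
  have hEub : ∀ (c : ℝ) (h : H), 0 ≤ c → ‖h‖ ≤ c →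
      E h ≤ M0 + (M0+L)*(κ*c) + L*(1+κ*c)*(κ*c) := by
    intro c h hc0 hc
    rw [hEeq]
    have hκc : 0 ≤ κ * c := mul_nonneg hκ0 hc0
    calc (∫ z : X × Y, φ (z.2:ℝ) ⟪h, K z.1⟫ ∂ρ)
        ≤ ∫ _z : X × Y, (M0 + (M0+L)*(κ*c) + L*(1+κ*c)*(κ*c)) ∂ρ := by
          refine integral_mono (hEint h) (integrable_const _) (fun z => ?_)
          refine hφub z.2 _ _ ?_ hκc
          calc |⟪h, K z.1⟫| ≤ ‖h‖ * ‖K z.1‖ := abs_real_inner_le_norm _ _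
          _ ≤ κ * c := by nlinarith [norm_nonneg h, hκ z.1, norm_nonneg (K z.1)]
      _ = _ := by rw [integral_const, probReal_univ, one_smul]
  have hΦtan : ∀ g h : H, E g + ⟪Φ g, h - g⟫ ≤ E h := by
    intro g h
    have hpt : ∀ z : X × Y, φ (z.2:ℝ) ⟪g, K z.1⟫ + ⟪h - g, φ' (z.2:ℝ) ⟪g, K z.1⟫ • K z.1⟫
        ≤ φ (z.2:ℝ) ⟪h, K z.1⟫ := by
      intro z
      have h1 := htan z.2 ⟪g, K z.1⟫ ⟪h, K z.1⟫
      have h2 : ⟪h - g, φ' (z.2:ℝ) ⟪g, K z.1⟫ • K z.1⟫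
          = φ' (z.2:ℝ) ⟪g, K z.1⟫ * (⟪h, K z.1⟫ - ⟪g, K z.1⟫) := by
        rw [real_inner_smul_right, inner_sub_left]
      rw [h2]; linarith
    have hint3 : Integrable (fun z : X × Y => ⟪h - g, φ' (z.2:ℝ) ⟪g, K z.1⟫ • K z.1⟫) ρ :=
      (hgint g).const_inner _
    have hmono := integral_mono
      (f := fun z : X × Y => φ (z.2:ℝ) ⟪g, K z.1⟫ + ⟪h - g, φ' (z.2:ℝ) ⟪g, K z.1⟫ • K z.1⟫)
      (g := fun z : X × Y => φ (z.2:ℝ) ⟪h, K z.1⟫)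
      ((hEint g).add hint3) (hEint h) hpt
    rw [integral_add (hEint g) hint3, integral_inner (hgint g)] at hmono
    have hfold : (∫ z : X × Y, φ' (z.2:ℝ) ⟪g, K z.1⟫ • K z.1 ∂ρ) = Φ g := by rw [hΦdef]
    rw [hfold] at hmono
    have hcomm : ⟪h - g, Φ g⟫ = ⟪Φ g, h - g⟫ := real_inner_comm _ _
    rw [hEeq g, hEeq h]
    linarith [hmono, hcomm]
  have hfmeas : ∀ t, 1 ≤ t → Measurable (f t) := by
    intro t ht
    induction t, ht using Nat.le_induction with
    | base =>
      have h0 : f 1 = fun _ => (0:H) := funext hf1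
      rw [h0]; exact measurable_const
    | succ t ht ih =>
      have h0 : f (t+1) = fun ω => f t ω
          - (η t * φ' (((zs t ω).2 : Y) : ℝ) ⟪f t ω, K (zs t ω).1⟫) • K (zs t ω).1 :=
        funext (hfrec t ht)
      rw [h0]
      have hK' : Measurable fun ω => K (zs t ω).1 := hKmeas.comp (measurable_fst.comp (hzmeas t))
      have hy' : Measurable fun ω => ((zs t ω).2 : ℝ) :=
        measurable_subtype_coe.comp (measurable_snd.comp (hzmeas t))
      have hin : Measurable fun ω => ⟪f t ω, K (zs t ω).1⟫ := ih.inner hK'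
      exact ih.sub ((measurable_const.mul (hφ'meas.comp (hy'.prodMk hin))).smul hK')
  have hBex : ∀ t, 1 ≤ t → ∃ B : ℝ, 0 ≤ B ∧ ∀ ω, ‖f t ω‖ ≤ B := by
    intro t ht
    induction t, ht using Nat.le_induction with
    | base => exact ⟨0, le_refl 0, fun ω => by rw [hf1]; simp⟩
    | succ t ht ih =>
      obtain ⟨B, hB0, hB⟩ := ih
      have hbnd : (0:ℝ) ≤ M0 + 2*L + L*(κ*B) := by
        nlinarith [mul_nonneg hL.le (mul_nonneg hκ0 hB0)]
      refine ⟨B + η t * ((M0 + 2*L + L*(κ*B)) * κ), ?_, fun ω => ?_⟩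
      · nlinarith [(hηpos t).le, mul_nonneg hbnd hκ0]
      · rw [hfrec t ht ω]
        have h1 : |⟪f t ω, K (zs t ω).1⟫| ≤ κ * B := by
          calc |⟪f t ω, K (zs t ω).1⟫| ≤ ‖f t ω‖ * ‖K (zs t ω).1‖ := abs_real_inner_le_norm _ _
          _ ≤ κ * B := by
            nlinarith [norm_nonneg (f t ω), hκ (zs t ω).1, norm_nonneg (K (zs t ω).1), hB ω]
        have h2 := hφ'absB (zs t ω).2 _ _ h1
        have h3 := hκ (zs t ω).1
        calc ‖f t ω - (η t * φ' (((zs t ω).2 : Y) : ℝ) ⟪f t ω, K (zs t ω).1⟫) • K (zs t ω).1‖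
            ≤ ‖f t ω‖ + ‖(η t * φ' (((zs t ω).2 : Y) : ℝ) ⟪f t ω, K (zs t ω).1⟫) • K (zs t ω).1‖ :=
              norm_sub_le _ _
        _ ≤ B + η t * ((M0 + 2*L + L*(κ*B)) * κ) := by
            rw [norm_smul, Real.norm_eq_abs, abs_mul, abs_of_pos (hηpos t)]
            have h5 : |φ' (((zs t ω).2 : Y) : ℝ) ⟪f t ω, K (zs t ω).1⟫| * ‖K (zs t ω).1‖
                ≤ (M0 + 2*L + L*(κ*B)) * κ := mul_le_mul h2 h3 (norm_nonneg _) hbnd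
            nlinarith [h5, (hηpos t).le, hB ω]
  have hfF : ∀ t, 1 ≤ t → ∀ ω,
      f t ω = ombF η φ' (fun z : X × Y => K z.1) (fun z : X × Y => (z.2:ℝ)) t (fun k => zs k ω) := by
    intro t ht
    induction t, ht using Nat.le_induction with
    | base => intro ω; rw [hf1, ombF_one]
    | succ t ht ih =>
      intro ω
      have h1 := ombF_succ η φ' (fun z : X × Y => K z.1) (fun z : X × Y => (z.2:ℝ))
        (show t ≠ 0 by omega) (fun k => zs k ω)
      rw [hfrec t ht ω, h1, ← ih ω]
  have hindep : ∀ t, 1 ≤ t → IndepFun (f t) (zs t) P := by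
    intro t ht
    have hSdisj : Disjoint (Finset.Ico 1 t) ({t} : Finset ℕ) := by
      rw [Finset.disjoint_singleton_right, Finset.mem_Ico]
      omega
    have base := hziid.indepFun_finset (Finset.Ico 1 t) {t} hSdisj hzmeas
    set Ψ : ((Finset.Ico 1 t : Finset ℕ) → X × Y) → H := fun v =>
      ombF η φ' (fun z : X × Y => K z.1) (fun z : X × Y => (z.2:ℝ)) t
        (fun k => if hk : k ∈ Finset.Ico 1 t then v ⟨k, hk⟩ else z₀) with hΨ
    have hΨmeas : Measurable Ψ := by
      refine (ombF_measurable η (hKmeas.comp measurable_fst)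
        (measurable_subtype_coe.comp measurable_snd) hφ'meas t).comp ?_
      refine measurable_pi_lambda _ (fun k => ?_)
      by_cases hk : k ∈ Finset.Ico 1 t
      · simp only [dif_pos hk]
        exact measurable_pi_apply _
      · simp only [dif_neg hk]
        exact measurable_const
    have heval : Measurable fun v : (({t} : Finset ℕ) → X × Y) =>
        v ⟨t, Finset.mem_singleton_self t⟩ := measurable_pi_apply _
    have hcomp := base.comp hΨmeas heval
    have hleft : (Ψ ∘ fun ω (i : (Finset.Ico 1 t : Finset ℕ)) => zs i ω) = f t := by
      funext ω
      show Ψ (fun i => zs i ω) = f t ω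
      rw [hΨ, hfF t ht ω]
      exact ombF_congr _ _ _ _ t _ _
        (fun k hk1 hk2 => by rw [dif_pos (Finset.mem_Ico.mpr ⟨hk1, hk2⟩)])
    have hright : ((fun v : (({t}:Finset ℕ) → X × Y) => v ⟨t, Finset.mem_singleton_self t⟩)
        ∘ fun ω (i : (({t}:Finset ℕ) : Type)) => zs i ω) = zs t := rfl
    rw [← hleft, ← hright]
    exact hcomp
  have hbint : ∀ (g : Ω → ℝ), Measurable g → ∀ c : ℝ, (∀ ω, |g ω| ≤ c) → Integrable g P :=
    fun g hg c hc => (integrable_const c).mono' hg.aestronglyMeasurable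
      (ae_of_all _ fun ω => by rw [Real.norm_eq_abs]; exact hc ω)
  have hEft_int : ∀ t, 1 ≤ t → Integrable (fun ω => E (f t ω)) P := by
    intro t ht
    obtain ⟨B, hB0, hB⟩ := hBex t ht
    refine hbint _ (hEmeas.comp (hfmeas t ht)) (M0 + (M0+L)*(κ*B) + L*(1+κ*B)*(κ*B))
      (fun ω => ?_)
    rw [abs_of_nonneg (hEnonneg _)]
    exact hEub B (f t ω) hB0 (hB ω)
  have heH_le : ∀ t, 1 ≤ t → E fH ≤ ∫ ω, E (f t ω) ∂P := by
    intro t ht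
    have h1 : (∫ _ω, E fH ∂P) ≤ ∫ ω, E (f t ω) ∂P :=
      integral_mono (integrable_const _) (hEft_int t ht) (fun ω => hmin (f t ω))
    rwa [integral_const, probReal_univ, one_smul] at h1
  have hrec : ∀ t, 1 ≤ t →
      (∫ ω, ‖f (t+1) ω - fH‖^2 ∂P) ≤ (∫ ω, ‖f t ω - fH‖^2 ∂P)
        - 2*η t*((∫ ω, E (f t ω) ∂P) - E fH)
        + η t^2*(κ^2*(4*L^2 + 4*L*(∫ ω, E (f t ω) ∂P))) := by
    intro t ht
    obtain ⟨B, hB0, hB⟩ := hBex t ht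
    have hft := hfmeas t ht
    have hy' : Measurable fun ω => ((zs t ω).2 : ℝ) :=
      measurable_subtype_coe.comp (measurable_snd.comp (hzmeas t))
    have hK' : Measurable fun ω => K (zs t ω).1 := hKmeas.comp (measurable_fst.comp (hzmeas t))
    have hφ'ω : Measurable fun ω => φ' (((zs t ω).2:Y):ℝ) ⟪f t ω, K (zs t ω).1⟫ :=
      hφ'meas.comp (hy'.prodMk (hft.inner hK'))
    have hκB : (0:ℝ) ≤ κ * B := mul_nonneg hκ0 hB0
    have hc1' : (0:ℝ) ≤ M0 + 2*L + L*(κ*B) := by nlinarith [mul_nonneg hL.le hκB]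
    have hipB : ∀ (h : H), ‖h‖ ≤ B → ∀ z : X × Y, |⟪h, K z.1⟫| ≤ κ * B := by
      intro h hh z
      calc |⟪h, K z.1⟫| ≤ ‖h‖ * ‖K z.1‖ := abs_real_inner_le_norm _ _
      _ ≤ κ * B := by nlinarith [norm_nonneg h, hκ z.1, norm_nonneg (K z.1)]
    have hG1bd : ∀ (h : H), ‖h‖ ≤ B → ∀ z : X × Y,
        |φ' (z.2:ℝ) ⟪h, K z.1⟫ * ⟪h - fH, K z.1⟫|
          ≤ (M0 + 2*L + L*(κ*B)) * (κ*(B+‖fH‖)) := by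
      intro h hh z
      rw [abs_mul]
      have h1 := hφ'absB z.2 _ _ (hipB h hh z)
      have h2 : |⟪h - fH, K z.1⟫| ≤ κ*(B+‖fH‖) := by
        calc |⟪h - fH, K z.1⟫| ≤ ‖h - fH‖ * ‖K z.1‖ := abs_real_inner_le_norm _ _
        _ ≤ κ*(B+‖fH‖) := by
          nlinarith [norm_sub_le h fH, norm_nonneg fH, hκ z.1, norm_nonneg (K z.1),
            norm_nonneg (h - fH), norm_nonneg h, hh]
      exact mul_le_mul h1 h2 (abs_nonneg _) hc1'
    have hG2bd : ∀ (h : H), ‖h‖ ≤ B → ∀ z : X × Y,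
        |(φ' (z.2:ℝ) ⟪h, K z.1⟫)^2 * ‖K z.1‖^2|
          ≤ (M0 + 2*L + L*(κ*B))^2 * κ^2 := by
      intro h hh z
      rw [abs_mul, abs_of_nonneg (sq_nonneg (φ' (z.2:ℝ) ⟪h, K z.1⟫)),
        abs_of_nonneg (sq_nonneg (‖K z.1‖))]
      have h1 := hφ'absB z.2 _ _ (hipB h hh z)
      have h2 : (φ' (z.2:ℝ) ⟪h, K z.1⟫)^2 ≤ (M0 + 2*L + L*(κ*B))^2 := by
        rw [← sq_abs]
        exact pow_le_pow_left₀ (abs_nonneg _) h1 2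
      have h3 : ‖K z.1‖^2 ≤ κ^2 := by nlinarith [hκ z.1, norm_nonneg (K z.1)]
      exact mul_le_mul h2 h3 (sq_nonneg _) (sq_nonneg _)
    have hexp : ∀ ω, ‖f (t+1) ω - fH‖^2 = ‖f t ω - fH‖^2
        - 2*η t*(φ' (((zs t ω).2:Y):ℝ) ⟪f t ω, K (zs t ω).1⟫ * ⟪f t ω - fH, K (zs t ω).1⟫)
        + η t^2*((φ' (((zs t ω).2:Y):ℝ) ⟪f t ω, K (zs t ω).1⟫)^2 * ‖K (zs t ω).1‖^2) := by
      intro ω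
      rw [hfrec t ht ω, sub_right_comm, norm_sub_sq_real, real_inner_smul_right, norm_smul,
        mul_pow, Real.norm_eq_abs, sq_abs]
      ring
    have hint1 : Integrable (fun ω => ‖f t ω - fH‖^2) P := by
      refine hbint _ (((hft.sub measurable_const).norm).pow_const 2) ((B + ‖fH‖)^2) (fun ω => ?_)
      rw [abs_of_nonneg (sq_nonneg _)]
      have h1 := norm_sub_le (f t ω) fH
      nlinarith [hB ω, norm_nonneg fH, norm_nonneg (f t ω - fH), norm_nonneg (f t ω)]
    have hq1m : Measurable (fun ω =>
        φ' (((zs t ω).2:Y):ℝ) ⟪f t ω, K (zs t ω).1⟫ * ⟪f t ω - fH, K (zs t ω).1⟫) :=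
      hφ'ω.mul ((hft.sub measurable_const).inner hK')
    have hint2 : Integrable (fun ω =>
        φ' (((zs t ω).2:Y):ℝ) ⟪f t ω, K (zs t ω).1⟫ * ⟪f t ω - fH, K (zs t ω).1⟫) P :=
      hbint _ hq1m _ (fun ω => hG1bd (f t ω) (hB ω) (zs t ω))
    have hq2m : Measurable (fun ω =>
        (φ' (((zs t ω).2:Y):ℝ) ⟪f t ω, K (zs t ω).1⟫)^2 * ‖K (zs t ω).1‖^2) :=
      (hφ'ω.pow_const 2).mul (hK'.norm.pow_const 2)
    have hint3 : Integrable (fun ω =>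
        (φ' (((zs t ω).2:Y):ℝ) ⟪f t ω, K (zs t ω).1⟫)^2 * ‖K (zs t ω).1‖^2) P :=
      hbint _ hq2m _ (fun ω => hG2bd (f t ω) (hB ω) (zs t ω))
    have heq1 : (∫ ω, ‖f (t+1) ω - fH‖^2 ∂P)
        = (∫ ω, ‖f t ω - fH‖^2 ∂P)
          - 2*η t*(∫ ω, φ' (((zs t ω).2:Y):ℝ) ⟪f t ω, K (zs t ω).1⟫
              * ⟪f t ω - fH, K (zs t ω).1⟫ ∂P)
          + η t^2*(∫ ω, (φ' (((zs t ω).2:Y):ℝ) ⟪f t ω, K (zs t ω).1⟫)^2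
              * ‖K (zs t ω).1‖^2 ∂P) := by
      calc (∫ ω, ‖f (t+1) ω - fH‖^2 ∂P)
          = ∫ ω, (‖f t ω - fH‖^2
            - 2*η t*(φ' (((zs t ω).2:Y):ℝ) ⟪f t ω, K (zs t ω).1⟫
                * ⟪f t ω - fH, K (zs t ω).1⟫)
            + η t^2*((φ' (((zs t ω).2:Y):ℝ) ⟪f t ω, K (zs t ω).1⟫)^2
                * ‖K (zs t ω).1‖^2)) ∂P :=
            integral_congr_ae (ae_of_all _ hexp)
        _ = _ := by
            have hint12 : Integrable (fun ω => ‖f t ω - fH‖^2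
                - 2*η t*(φ' (((zs t ω).2:Y):ℝ) ⟪f t ω, K (zs t ω).1⟫
                    * ⟪f t ω - fH, K (zs t ω).1⟫)) P :=
              hint1.sub (hint2.const_mul (2*η t))
            rw [integral_add hint12 (hint3.const_mul (η t^2)),
              integral_sub hint1 (hint2.const_mul (2*η t)), integral_const_mul, integral_const_mul]
    have hsmeas : MeasurableSet {h : H | ‖h‖ ≤ B} :=
      measurableSet_le measurable_norm measurable_const
    have hG1meas : Measurable fun p : H × (X × Y) =>
        φ' (p.2.2:ℝ) ⟪p.1, K p.2.1⟫ * ⟪p.1 - fH, K p.2.1⟫ :=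
      hG1m.mul ((measurable_fst.sub measurable_const).inner (hKz.comp measurable_snd))
    have hI1 : (∫ ω, φ' (((zs t ω).2:Y):ℝ) ⟪f t ω, K (zs t ω).1⟫
          * ⟪f t ω - fH, K (zs t ω).1⟫ ∂P)
        = ∫ ω, ∫ z : X × Y, φ' (z.2:ℝ) ⟪f t ω, K z.1⟫ * ⟪f t ω - fH, K z.1⟫ ∂ρ ∂P :=
      omb_indep_integral P ρ hft (hzmeas t) (hindep t ht) (hzdist t)
        (G := fun h z => φ' (z.2:ℝ) ⟪h, K z.1⟫ * ⟪h - fH, K z.1⟫) hG1meas hsmeas hB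
        (fun h hh z => hG1bd h hh z)
    have hI1' : ∀ h : H, (∫ z : X × Y, φ' (z.2:ℝ) ⟪h, K z.1⟫ * ⟪h - fH, K z.1⟫ ∂ρ)
        = ⟪Φ h, h - fH⟫ := by
      intro h
      have h1 : ∀ z : X × Y, φ' (z.2:ℝ) ⟪h, K z.1⟫ * ⟪h - fH, K z.1⟫
          = ⟪h - fH, φ' (z.2:ℝ) ⟪h, K z.1⟫ • K z.1⟫ := by
        intro z
        rw [real_inner_smul_right]
      calc (∫ z : X × Y, φ' (z.2:ℝ) ⟪h, K z.1⟫ * ⟪h - fH, K z.1⟫ ∂ρ)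
          = ∫ z : X × Y, ⟪h - fH, φ' (z.2:ℝ) ⟪h, K z.1⟫ • K z.1⟫ ∂ρ :=
            integral_congr_ae (ae_of_all _ h1)
        _ = ⟪h - fH, ∫ z : X × Y, φ' (z.2:ℝ) ⟪h, K z.1⟫ • K z.1 ∂ρ⟫ :=
            integral_inner (hgint h) _
        _ = ⟪Φ h, h - fH⟫ := by
            rw [show (∫ z : X × Y, φ' (z.2:ℝ) ⟪h, K z.1⟫ • K z.1 ∂ρ) = Φ h from by rw [hΦdef],
              real_inner_comm]
    have hΦint : Integrable (fun ω => ⟪Φ (f t ω), f t ω - fH⟫) P := by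
      refine hbint _ ((hΦmeas.comp hft).inner (hft.sub measurable_const))
        ((κ*(M0+2*L+L*(κ*B))) * (B+‖fH‖)) (fun ω => ?_)
      have e0 : M0 + 2*L + L*(κ*‖f t ω‖) ≤ M0 + 2*L + L*(κ*B) := by
        nlinarith [mul_le_mul_of_nonneg_left (hB ω) (mul_nonneg hL.le hκ0)]
      have e1 : ‖Φ (f t ω)‖ ≤ κ*(M0+2*L+L*(κ*B)) :=
        (hΦnorm _).trans (mul_le_mul_of_nonneg_left e0 hκ0)
      have e2 : ‖f t ω - fH‖ ≤ B + ‖fH‖ := (norm_sub_le _ _).trans (by linarith [hB ω])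
      exact (abs_real_inner_le_norm _ _).trans
        (mul_le_mul e1 e2 (norm_nonneg _) (mul_nonneg hκ0 hc1'))
    have hT2 : ((∫ ω, E (f t ω) ∂P) - E fH)
        ≤ ∫ ω, φ' (((zs t ω).2:Y):ℝ) ⟪f t ω, K (zs t ω).1⟫
            * ⟪f t ω - fH, K (zs t ω).1⟫ ∂P := by
      rw [hI1]
      have heq2 : (∫ ω, ∫ z : X × Y, φ' (z.2:ℝ) ⟪f t ω, K z.1⟫ * ⟪f t ω - fH, K z.1⟫ ∂ρ ∂P)
          = ∫ ω, ⟪Φ (f t ω), f t ω - fH⟫ ∂P :=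
        integral_congr_ae (ae_of_all _ (fun ω => hI1' (f t ω)))
      rw [heq2]
      have hptw : ∀ ω, E (f t ω) - E fH ≤ ⟪Φ (f t ω), f t ω - fH⟫ := by
        intro ω
        have h1 := hΦtan (f t ω) fH
        have h2 : fH - f t ω = -(f t ω - fH) := (neg_sub _ _).symm
        rw [h2, inner_neg_right] at h1
        linarith
      have h4 := integral_mono (f := fun ω => E (f t ω) - E fH)
        (g := fun ω => ⟪Φ (f t ω), f t ω - fH⟫)
        ((hEft_int t ht).sub (integrable_const (E fH))) hΦint hptw
      rwa [integral_sub (hEft_int t ht) (integrable_const _), integral_const, probReal_univ,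
         one_smul] at h4
    have hG2meas : Measurable fun p : H × (X × Y) =>
        (φ' (p.2.2:ℝ) ⟪p.1, K p.2.1⟫)^2 * ‖K p.2.1‖^2 :=
      (hG1m.pow_const 2).mul (((hKz.comp measurable_snd).norm).pow_const 2)
    have hI2 : (∫ ω, (φ' (((zs t ω).2:Y):ℝ) ⟪f t ω, K (zs t ω).1⟫)^2 * ‖K (zs t ω).1‖^2 ∂P)
        = ∫ ω, ∫ z : X × Y, (φ' (z.2:ℝ) ⟪f t ω, K z.1⟫)^2 * ‖K z.1‖^2 ∂ρ ∂P :=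
      omb_indep_integral P ρ hft (hzmeas t) (hindep t ht) (hzdist t)
        (G := fun h z => (φ' (z.2:ℝ) ⟪h, K z.1⟫)^2 * ‖K z.1‖^2) hG2meas hsmeas hB
        (fun h hh z => hG2bd h hh z)
    have hbintρ : ∀ (g : X × Y → ℝ), Measurable g → ∀ c : ℝ, (∀ z, |g z| ≤ c) →
        Integrable g ρ :=
      fun g hg c hc => (integrable_const c).mono' hg.aestronglyMeasurable
        (ae_of_all _ fun z => by rw [Real.norm_eq_abs]; exact hc z)
    have hinner3 : ∀ h : H, ‖h‖ ≤ B →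
        (∫ z : X × Y, (φ' (z.2:ℝ) ⟪h, K z.1⟫)^2 * ‖K z.1‖^2 ∂ρ)
          ≤ κ^2 * (4*L^2 + 4*L* E h) := by
      intro h hh
      have hptz : ∀ z : X × Y, (φ' (z.2:ℝ) ⟪h, K z.1⟫)^2 * ‖K z.1‖^2
          ≤ κ^2 * (4*L^2 + 4*L*φ (z.2:ℝ) ⟪h, K z.1⟫) := by
        intro z
        have h1 := hsq z.2 ⟪h, K z.1⟫
        have h2 : ‖K z.1‖^2 ≤ κ^2 := by nlinarith [hκ z.1, norm_nonneg (K z.1)]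
        have h4 : 0 ≤ 4*L^2 + 4*L*φ (z.2:ℝ) ⟪h, K z.1⟫ := by
          nlinarith [hφnonneg _ z.2.2 ⟪h, K z.1⟫, hL.le, sq_nonneg L]
        nlinarith [mul_le_mul h1 h2 (sq_nonneg (‖K z.1‖)) h4]
      have hql : Integrable (fun z : X × Y => (φ' (z.2:ℝ) ⟪h, K z.1⟫)^2 * ‖K z.1‖^2) ρ := by
        refine hbintρ _ ?_ ((M0 + 2*L + L*(κ*B))^2 * κ^2) (fun z => hG2bd h hh z)
        exact ((hφ'meas.comp (hyz.prodMk (measurable_const.inner hKz))).pow_const 2).mul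
          (hKz.norm.pow_const 2)
      have hqr : Integrable (fun z : X × Y => κ^2 * (4*L^2 + 4*L*φ (z.2:ℝ) ⟪h, K z.1⟫)) ρ :=
        (((integrable_const (4*L^2)).add ((hEint h).const_mul (4*L))).const_mul (κ^2))
      have h5 := integral_mono
        (f := fun z : X × Y => (φ' (z.2:ℝ) ⟪h, K z.1⟫)^2 * ‖K z.1‖^2)
        (g := fun z : X × Y => κ^2 * (4*L^2 + 4*L*φ (z.2:ℝ) ⟪h, K z.1⟫))
        hql hqr hptz
      have h6 : (∫ z : X × Y, κ^2 * (4*L^2 + 4*L*φ (z.2:ℝ) ⟪h, K z.1⟫) ∂ρ)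
          = κ^2*(4*L^2 + 4*L*E h) := by
        rw [integral_const_mul, integral_add (integrable_const _) ((hEint h).const_mul _),
          integral_const_mul, integral_const, probReal_univ, one_smul, hEeq h]
        rw [integral_const_mul]
      linarith [h5, h6]
    have hintL : Integrable
        (fun ω => ∫ z : X × Y, (φ' (z.2:ℝ) ⟪f t ω, K z.1⟫)^2 * ‖K z.1‖^2 ∂ρ) P := by
      refine hbint _ ((hG2meas.stronglyMeasurable.integral_prod_right'.measurable).comp hft)
        ((M0 + 2*L + L*(κ*B))^2 * κ^2) (fun ω => ?_)
      have h7 : ‖∫ z : X × Y, (φ' (z.2:ℝ) ⟪f t ω, K z.1⟫)^2 * ‖K z.1‖^2 ∂ρ‖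
          ≤ ∫ _z : X × Y, (M0 + 2*L + L*(κ*B))^2 * κ^2 ∂ρ :=
        norm_integral_le_of_norm_le (integrable_const _)
          (ae_of_all _ fun z => by rw [Real.norm_eq_abs]; exact hG2bd (f t ω) (hB ω) z)
      rw [integral_const, probReal_univ, one_smul] at h7
      rw [← Real.norm_eq_abs]
      exact h7
    have hintR : Integrable (fun ω => κ^2*(4*L^2 + 4*L*E (f t ω))) P :=
      (((integrable_const (4*L^2)).add ((hEft_int t ht).const_mul (4*L))).const_mul (κ^2))
    have hT3 : (∫ ω, (φ' (((zs t ω).2:Y):ℝ) ⟪f t ω, K (zs t ω).1⟫)^2 * ‖K (zs t ω).1‖^2 ∂P)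
        ≤ κ^2*(4*L^2 + 4*L*(∫ ω, E (f t ω) ∂P)) := by
      rw [hI2]
      have h8 := integral_mono
        (f := fun ω => ∫ z : X × Y, (φ' (z.2:ℝ) ⟪f t ω, K z.1⟫)^2 * ‖K z.1‖^2 ∂ρ)
        (g := fun ω => κ^2*(4*L^2 + 4*L*E (f t ω)))
        hintL hintR (fun ω => hinner3 (f t ω) (hB ω))
      have h9 : (∫ ω, κ^2*(4*L^2 + 4*L*E (f t ω)) ∂P)
          = κ^2*(4*L^2 + 4*L*(∫ ω, E (f t ω) ∂P)) := by
        rw [integral_const_mul, integral_add (integrable_const _) ((hEft_int t ht).const_mul _),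
          integral_const_mul, integral_const, probReal_univ, one_smul]
        rw [integral_const_mul]
      linarith [h8, h9]
    rw [heq1]
    have hm1 : 2*η t*((∫ ω, E (f t ω) ∂P) - E fH)
        ≤ 2*η t*(∫ ω, φ' (((zs t ω).2:Y):ℝ) ⟪f t ω, K (zs t ω).1⟫
            * ⟪f t ω - fH, K (zs t ω).1⟫ ∂P) :=
      mul_le_mul_of_nonneg_left hT2 (by linarith [hηpos t] : (0:ℝ) ≤ 2*η t)
    have hm2 : η t^2*(∫ ω, (φ' (((zs t ω).2:Y):ℝ) ⟪f t ω, K (zs t ω).1⟫)^2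
            * ‖K (zs t ω).1‖^2 ∂P)
        ≤ η t^2*(κ^2*(4*L^2+4*L*(∫ ω, E (f t ω) ∂P))) :=
      mul_le_mul_of_nonneg_left hT3 (sq_nonneg _)
    linarith [hm1, hm2]
  set ε₀ : ℝ := 1/(4*L*(κ^2+1)) with hε₀def
  set γv : ℝ := 4*L*(κ^2+1)*(L+MH) + 1 with hγdef
  have hε₀ : 0 < ε₀ := by rw [hε₀def]; positivity
  have hγ : 0 < γv := by rw [hγdef]; positivity
  have hrec2 : ∀ t, 1 ≤ t → η t ≤ ε₀ →
      (∫ ω, ‖f (t+1) ω - fH‖^2 ∂P) ≤ (∫ ω, ‖f t ω - fH‖^2 ∂P) + γv * η t^2 := by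
    intro t ht hsm
    have h1 := hrec t ht
    have he := heH_le t ht
    have hee : 0 ≤ (∫ ω, E (f t ω) ∂P) - E fH := by linarith
    have hsm' : 4*L*(κ^2+1)*η t ≤ 1 := by
      rw [hε₀def] at hsm
      have h2 : (0:ℝ) < 4*L*(κ^2+1) := by positivity
      calc 4*L*(κ^2+1)*η t ≤ 4*L*(κ^2+1)*(1/(4*L*(κ^2+1))) :=
        mul_le_mul_of_nonneg_left hsm h2.le
      _ = 1 := by field_simp
    have k1 : η t^2*(κ^2*(4*L^2 + 4*L*(∫ ω, E (f t ω) ∂P)))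
        = 4*L*κ^2*(η t^2*((∫ ω, E (f t ω) ∂P) - E fH))
          + η t^2*κ^2*4*L^2 + 4*L*κ^2*η t^2*(E fH) := by ring
    have b1 : 4*L*κ^2*η t ≤ 2 := by
      have b2 : 4*L*κ^2*η t ≤ 4*L*(κ^2+1)*η t := by
        nlinarith [mul_nonneg hL.le (hηpos t).le]
      linarith
    have k2 : 4*L*κ^2*(η t^2*((∫ ω, E (f t ω) ∂P) - E fH))
        ≤ 2*(η t*((∫ ω, E (f t ω) ∂P) - E fH)) := by
      calc 4*L*κ^2*(η t^2*((∫ ω, E (f t ω) ∂P) - E fH))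
          = (4*L*κ^2*η t)*(η t*((∫ ω, E (f t ω) ∂P) - E fH)) := by ring
      _ ≤ 2*(η t*((∫ ω, E (f t ω) ∂P) - E fH)) :=
        mul_le_mul_of_nonneg_right b1 (mul_nonneg (hηpos t).le hee)
    have c1 : κ^2*(L + E fH) ≤ (κ^2+1)*(L+MH) :=
      mul_le_mul (by nlinarith [sq_nonneg κ]) (by linarith [hEfH])
        (by linarith [hEnonneg fH, hL.le]) (by nlinarith [sq_nonneg κ, hL.le, hMH0])
    have c2 : η t^2*κ^2*4*L^2 + 4*L*κ^2*η t^2*(E fH) ≤ γv * η t^2 := by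
      rw [hγdef]
      have c3 : 4*L*(κ^2*(L + E fH)) ≤ 4*L*((κ^2+1)*(L+MH)) :=
        mul_le_mul_of_nonneg_left c1 (by linarith [hL.le])
      have c4 : η t^2 * (4*L*(κ^2*(L + E fH))) ≤ η t^2 * (4*L*((κ^2+1)*(L+MH))) :=
        mul_le_mul_of_nonneg_left c3 (sq_nonneg _)
      nlinarith [sq_nonneg (η t)]
    linarith [h1, k1, k2, c2]
  obtain ⟨N, hN1, hNsm⟩ : ∃ N : ℕ, 1 ≤ N ∧ ∀ t, N ≤ t → η t ≤ ε₀ := by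
    have hev : ∀ᶠ t in atTop, η t < ε₀ := hη0.eventually_lt_const hε₀
    obtain ⟨N0, hN0⟩ := eventually_atTop.mp hev
    exact ⟨max N0 1, le_max_right _ _,
      fun t htN => (hN0 t (le_trans (le_max_left _ _) htN)).le⟩
  set Cv : ℝ := 1 + ∑ k ∈ Finset.Icc 1 N, |∫ ω, ‖f k ω - fH‖^2 ∂P| with hCdef
  have hCv : 0 < Cv := by
    rw [hCdef]
    have : (0:ℝ) ≤ ∑ k ∈ Finset.Icc 1 N, |∫ ω, ‖f k ω - fH‖^2 ∂P| :=
      Finset.sum_nonneg (fun k _ => abs_nonneg _)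
    linarith
  have hbase : ∀ t, 1 ≤ t → t ≤ N → (∫ ω, ‖f t ω - fH‖^2 ∂P) ≤ Cv := by
    intro t h1 h2
    rw [hCdef]
    have hmem : t ∈ Finset.Icc 1 N := Finset.mem_Icc.mpr ⟨h1, h2⟩
    have := Finset.single_le_sum (f := fun k => |∫ ω, ‖f k ω - fH‖^2 ∂P|)
      (fun k _ => abs_nonneg _) hmem
    linarith [le_abs_self (∫ ω, ‖f t ω - fH‖^2 ∂P)]
  have hkey : ∀ t, 1 ≤ t →
      (∫ ω, ‖f t ω - fH‖^2 ∂P) ≤ Cv + γv * ∑ k ∈ Finset.Icc 1 (t-1), η k^2 := by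
    intro t ht
    induction t, ht using Nat.le_induction with
    | base =>
      have h0 : (1:ℕ) - 1 = 0 := rfl
      rw [h0, show Finset.Icc 1 0 = ∅ from Finset.Icc_eq_empty (by omega), Finset.sum_empty,
        mul_zero, add_zero]
      exact hbase 1 le_rfl hN1
    | succ t ht ih =>
      rcases le_or_gt (t+1) N with hle | hgt
      · have h1 := hbase (t+1) (by omega) hle
        have hs0 : (0:ℝ) ≤ ∑ k ∈ Finset.Icc 1 (t+1-1), η k^2 :=
          Finset.sum_nonneg fun k _ => sq_nonneg _
        nlinarith [hγ]
      · have hNt : N ≤ t := by omega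
        have h2 := hrec2 t ht (hNsm t hNt)
        have h3 : t + 1 - 1 = t := by omega
        rw [h3]
        have h5 : t - 1 + 1 = t := by omega
        have h4 : ∑ k ∈ Finset.Icc 1 t, η k^2 = (∑ k ∈ Finset.Icc 1 (t-1), η k^2) + η t^2 := by
          rw [← h5, Finset.sum_Icc_succ_top (by omega : 1 ≤ t - 1 + 1), h5]
        rw [h4]
        linarith [ih]
  have hkey' : ∀ t, 1 ≤ t →
      (∫ ω, ‖f t ω - fH‖^2 ∂P) ≤ Cv + γv * ∑ k ∈ Finset.Icc 1 t, η k^2 := by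
    intro t ht
    refine (hkey t ht).trans ?_
    have hsub : Finset.Icc 1 (t-1) ⊆ Finset.Icc 1 t := by
      intro k hk
      rw [Finset.mem_Icc] at hk ⊢
      omega
    have h2 := Finset.sum_le_sum_of_subset_of_nonneg hsub (fun k _ _ => sq_nonneg (η k))
    have h3 := mul_le_mul_of_nonneg_left h2 hγ.le
    linarith
  have hCS : ∀ t, 1 ≤ t →
      ((∫ ω, E (f t ω) ∂P) - E fH)^2
        ≤ (∫ ω, ‖Φ (f t ω)‖^2 ∂P) * (∫ ω, ‖f t ω - fH‖^2 ∂P) := by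
    intro t ht
    obtain ⟨B, hB0, hB⟩ := hBex t ht
    have hft := hfmeas t ht
    have hc1' : (0:ℝ) ≤ M0 + 2*L + L*(κ*B) := by
      nlinarith [mul_nonneg hL.le (mul_nonneg hκ0 hB0)]
    have hΦB : ∀ ω, ‖Φ (f t ω)‖ ≤ κ*(M0+2*L+L*(κ*B)) := by
      intro ω
      refine (hΦnorm (f t ω)).trans ?_
      have e0 : M0 + 2*L + L*(κ*‖f t ω‖) ≤ M0 + 2*L + L*(κ*B) := by
        nlinarith [mul_le_mul_of_nonneg_left (hB ω) (mul_nonneg hL.le hκ0)]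
      exact mul_le_mul_of_nonneg_left e0 hκ0
    have hΔB : ∀ ω, ‖f t ω - fH‖ ≤ B + ‖fH‖ :=
      fun ω => (norm_sub_le _ _).trans (by linarith [hB ω])
    have hΦc : (0:ℝ) ≤ κ*(M0+2*L+L*(κ*B)) := mul_nonneg hκ0 hc1'
    have hmeasN : Measurable fun ω => ‖Φ (f t ω)‖ := (hΦmeas.comp hft).norm
    have hmeasD : Measurable fun ω => ‖f t ω - fH‖ := (hft.sub measurable_const).norm
    have hint2 : Integrable (fun ω => ‖Φ (f t ω)‖ * ‖f t ω - fH‖) P := by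
      refine hbint _ (hmeasN.mul hmeasD) ((κ*(M0+2*L+L*(κ*B)))*(B+‖fH‖)) (fun ω => ?_)
      rw [abs_of_nonneg (mul_nonneg (norm_nonneg _) (norm_nonneg _))]
      exact mul_le_mul (hΦB ω) (hΔB ω) (norm_nonneg _) hΦc
    have step1 : ((∫ ω, E (f t ω) ∂P) - E fH) ≤ ∫ ω, ‖Φ (f t ω)‖ * ‖f t ω - fH‖ ∂P := by
      have hptw : ∀ ω, E (f t ω) - E fH ≤ ‖Φ (f t ω)‖ * ‖f t ω - fH‖ := by
        intro ω
        have h1 := hΦtan (f t ω) fH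
        have h2 : fH - f t ω = -(f t ω - fH) := (neg_sub _ _).symm
        rw [h2, inner_neg_right] at h1
        have h3 := real_inner_le_norm (Φ (f t ω)) (f t ω - fH)
        linarith
      have h4 := integral_mono
        (f := fun ω => E (f t ω) - E fH)
        (g := fun ω => ‖Φ (f t ω)‖ * ‖f t ω - fH‖)
        ((hEft_int t ht).sub (integrable_const (E fH))) hint2 hptw
      rwa [integral_sub (hEft_int t ht) (integrable_const _), integral_const, probReal_univ,
         one_smul] at h4
    have hconj : Real.HolderConjugate 2 2 := Real.HolderConjugate.two_two
    have hmem1 : MemLp (fun ω => ‖Φ (f t ω)‖) (ENNReal.ofReal 2) P :=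
      MemLp.of_bound hmeasN.aestronglyMeasurable _
        (ae_of_all _ fun ω => by rw [norm_norm]; exact hΦB ω)
    have hmem2 : MemLp (fun ω => ‖f t ω - fH‖) (ENNReal.ofReal 2) P :=
      MemLp.of_bound hmeasD.aestronglyMeasurable _
        (ae_of_all _ fun ω => by rw [norm_norm]; exact hΔB ω)
    have holder := integral_mul_le_Lp_mul_Lq_of_nonneg hconj
      (ae_of_all _ fun ω => norm_nonneg (Φ (f t ω)))
      (ae_of_all _ fun ω => norm_nonneg (f t ω - fH)) hmem1 hmem2
    have hr2 : ∀ u : ℝ, u ^ (2:ℝ) = u^2 := fun u => by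
      rw [show (2:ℝ) = ((2:ℕ):ℝ) by norm_num, Real.rpow_natCast]
    simp only [hr2] at holder
    have hA : (0:ℝ) ≤ ∫ ω, ‖Φ (f t ω)‖^2 ∂P := integral_nonneg fun ω => sq_nonneg _
    have hDD : (0:ℝ) ≤ ∫ ω, ‖f t ω - fH‖^2 ∂P := integral_nonneg fun ω => sq_nonneg _
    have hfin : ((∫ ω, E (f t ω) ∂P) - E fH)
        ≤ (∫ ω, ‖Φ (f t ω)‖^2 ∂P)^((1:ℝ)/2) * (∫ ω, ‖f t ω - fH‖^2 ∂P)^((1:ℝ)/2) :=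
      le_trans step1 holder
    have hsq2 : ∀ u : ℝ, 0 ≤ u → (u^((1:ℝ)/2))^2 = u := fun u hu => by
      rw [← Real.rpow_natCast (u^((1:ℝ)/2)) 2, ← Real.rpow_mul hu]
      norm_num
    have hnn : 0 ≤ (∫ ω, E (f t ω) ∂P) - E fH := by linarith [heH_le t ht]
    calc ((∫ ω, E (f t ω) ∂P) - E fH)^2
        ≤ ((∫ ω, ‖Φ (f t ω)‖^2 ∂P)^((1:ℝ)/2) * (∫ ω, ‖f t ω - fH‖^2 ∂P)^((1:ℝ)/2))^2 :=
          pow_le_pow_left₀ hnn hfin 2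
      _ = (∫ ω, ‖Φ (f t ω)‖^2 ∂P) * (∫ ω, ‖f t ω - fH‖^2 ∂P) := by
          rw [mul_pow, hsq2 _ hA, hsq2 _ hDD]
  refine ⟨Cv, γv, hCv, hγ, fun t ht => ⟨hkey' t ht, ?_⟩⟩
  have hD : 0 < Cv + γv * ∑ k ∈ Finset.Icc 1 t, η k^2 := by
    have : (0:ℝ) ≤ ∑ k ∈ Finset.Icc 1 t, η k^2 :=
      Finset.sum_nonneg (fun k _ => sq_nonneg _)
    nlinarith [hγ]
  rw [div_le_iff₀ hD]
  have hgoalR : (∫ ω, ‖∫ z : X × Y, φ' (z.2:ℝ) ⟪f t ω, K z.1⟫ • K z.1 ∂ρ‖^2 ∂P)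
      = ∫ ω, ‖Φ (f t ω)‖^2 ∂P := by rw [hΦdef]
  rw [hgoalR]
  have hA : 0 ≤ ∫ ω, ‖Φ (f t ω)‖^2 ∂P := integral_nonneg (fun ω => sq_nonneg _)
  calc ((∫ ω, E (f t ω) ∂P) - E fH)^2
      ≤ (∫ ω, ‖Φ (f t ω)‖^2 ∂P) * (∫ ω, ‖f t ω - fH‖^2 ∂P) := hCS t ht
    _ ≤ (∫ ω, ‖Φ (f t ω)‖^2 ∂P) * (Cv + γv * ∑ k ∈ Finset.Icc 1 t, η k^2) :=
      mul_le_mul_of_nonneg_left (hkey' t ht) hA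
end

section
/- Let {f_t}_{t∈ℕ} be the online gradient descent iterates and suppose Assumption 1 holds. Assume η_t ≤ 1/(Aκ²) for all t ∈ ℕ, where A = 2 α^{(1−α)/(1+α)} L^{2/(1+α)} (1+α) and B = α^{−2α/(1+α)} L^{2/(1+α)} (1−α²). Then, for every sample path and every t ∈ ℕ: ‖f_{t+1} − f_H‖² ≤ C₁ ∑_{k=0}^t η_k and ‖f_{t+1}‖² ≤ C₁ ∑_{k=1}^t η_k, where η₀ := 1 and C₁ = ‖f_H‖² + B/A + 2 max{sup_{y∈Y} φ(y,0), sup_{(x,y)∈Z} φ(y, f_H(x))}. If in addition η_{t+1} ≤ η_t for all t, then ∑_{k=1}^t η_k² φ(y_k, f_k(x_k)) ≤ η₁‖f_H‖² + C₂ ∑_{k=1}^t η_k², where C₂ = 2 sup_{(x,y)∈Z} φ(y, f_H(x)) + η₁ κ² B. -/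
open MeasureTheory ProbabilityTheory Filter Real
open scoped RealInnerProductSpace


lemma tangent_line_le {g g' : ℝ → ℝ}
    (hconv : ConvexOn ℝ Set.univ g) (hderiv : ∀ s, HasDerivAt g (g' s) s)
    (a b : ℝ) : g a + g' a * (b - a) ≤ g b := by
  rcases lt_trichotomy a b with h | h | h
  · have h1 := hconv.le_slope_of_hasDerivAt (Set.mem_univ a) (Set.mem_univ b) h (hderiv a)
    rw [slope_def_field] at h1
    have hba : 0 < b - a := sub_pos.mpr h
    have := (le_div_iff₀ hba).mp h1
    linarith
  · subst h; simp
  · have h2 := hconv.slope_le_of_hasDerivAt (Set.mem_univ b) (Set.mem_univ a) h (hderiv a)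
    rw [slope_def_field] at h2
    have hab : 0 < a - b := sub_pos.mpr h
    have := (div_le_iff₀ hab).mp h2
    nlinarith

lemma deriv_sq_le_aux {L α : ℝ} (hL : 0 < L) (hα0 : 0 < α) (hα1 : α ≤ 1)
    {c G : ℝ} (hc : 0 ≤ c) (hG : 0 ≤ G)
    (h : ∀ r : ℝ, 0 ≤ r → c * r ≤ G + L * r ^ (1 + α)) :
    c ^ 2 ≤ (2 * α ^ ((1 - α) / (1 + α)) * L ^ (2 / (1 + α)) * (1 + α)) * G
      + α ^ (-(2 * α) / (1 + α)) * L ^ (2 / (1 + α)) * (1 - α ^ 2) := by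
  have hq : (0:ℝ) < 1 + α := by linarith
  have hq' : (1:ℝ) + α ≠ 0 := ne_of_gt hq
  have hα0' : α ≠ 0 := ne_of_gt hα0
  have hBnn : 0 ≤ α ^ (-(2 * α) / (1 + α)) * L ^ (2 / (1 + α)) * (1 - α ^ 2) := by
    have h1 : (0:ℝ) ≤ 1 - α ^ 2 := by nlinarith
    have h2 : (0:ℝ) < α ^ (-(2 * α) / (1 + α)) := Real.rpow_pos_of_pos hα0 _
    have h3 : (0:ℝ) < L ^ (2 / (1 + α)) := Real.rpow_pos_of_pos hL _
    positivity
  rcases eq_or_lt_of_le hc with hc0 | hcpos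
  · have hAG : 0 ≤ (2 * α ^ ((1 - α) / (1 + α)) * L ^ (2 / (1 + α)) * (1 + α)) * G := by
      have h2 : (0:ℝ) < α ^ ((1 - α) / (1 + α)) := Real.rpow_pos_of_pos hα0 _
      have h3 : (0:ℝ) < L ^ (2 / (1 + α)) := Real.rpow_pos_of_pos hL _
      positivity
    rw [← hc0]
    simpa using by linarith
  · set q : ℝ := 1 + α with hqdef
    set θ : ℝ := 2 * α / q with hθ
    set p : ℝ := q / α with hp
    have hLq : (0:ℝ) < L * q := mul_pos hL hq
    set K : ℝ := (α / q) * (L * q) ^ (-α⁻¹) with hK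
    have hKpos : 0 < K := mul_pos (div_pos hα0 hq) (Real.rpow_pos_of_pos hLq _)
    set r₀ : ℝ := (c / (L * q)) ^ α⁻¹ with hr
    have hr₀pos : 0 < r₀ := Real.rpow_pos_of_pos (div_pos hcpos hLq) _
    have hr₀α : r₀ ^ α = c / (L * q) := by
      rw [hr, ← Real.rpow_mul (div_pos hcpos hLq).le, inv_mul_cancel₀ hα0', Real.rpow_one]
    have h1 : c * r₀ ≤ G + L * r₀ ^ q := h r₀ hr₀pos.le
    have h2 : L * r₀ ^ q = c * r₀ / q := by
      have e : r₀ ^ q = r₀ * r₀ ^ α := by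
        rw [hqdef, Real.rpow_add hr₀pos, Real.rpow_one]
      rw [e, hr₀α]
      field_simp
    have hGge : c * r₀ * (α / q) ≤ G := by
      rw [h2] at h1
      have e : c * r₀ * (α / q) = c * r₀ - c * r₀ / q := by
        field_simp; ring
      linarith [e ▸ (by linarith : c * r₀ - c * r₀ / q ≤ G)]
    have hr0 : r₀ = c ^ α⁻¹ * (L * q) ^ (-α⁻¹) := by
      rw [hr, Real.div_rpow hcpos.le hLq.le, Real.rpow_neg hLq.le, div_eq_mul_inv]
    have hcp : c ^ p = c * c ^ α⁻¹ := by
      have ep : p = 1 + α⁻¹ := by rw [hp, hqdef]; field_simp; try ring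
      rw [ep, Real.rpow_add hcpos, Real.rpow_one]
    have hKc : K * c ^ p ≤ G := by
      have e : K * c ^ p = c * r₀ * (α / q) := by rw [hK, hcp, hr0]; ring
      rw [e]; exact hGge
    set D : ℝ := K ^ (-θ) with hD
    have hDpos : 0 < D := Real.rpow_pos_of_pos hKpos _
    set P₁ : ℝ := c ^ p * K ^ (1 - θ) with hP₁
    have hP₁pos : 0 < P₁ := mul_pos (Real.rpow_pos_of_pos hcpos _) (Real.rpow_pos_of_pos hKpos _)
    have hθ0 : 0 ≤ θ := by
      rw [hθ]; positivity
    have hθ1 : θ ≤ 1 := by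
      rw [hθ, div_le_one hq, hqdef]; linarith
    have amgm := Real.geom_mean_le_arith_mean2_weighted hθ0 (by linarith : 0 ≤ 1 - θ)
      hP₁pos.le hDpos.le (by ring)
    have hgeom : P₁ ^ θ * D ^ (1 - θ) = c ^ 2 := by
      rw [hP₁, hD, Real.mul_rpow (Real.rpow_nonneg hcpos.le _) (Real.rpow_nonneg hKpos.le _),
        ← Real.rpow_mul hcpos.le, ← Real.rpow_mul hKpos.le, ← Real.rpow_mul hKpos.le,
        mul_assoc, ← Real.rpow_add hKpos]
      have e1 : p * θ = 2 := by rw [hp, hθ]; field_simp; try ring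
      have e2 : (1 - θ) * θ + -θ * (1 - θ) = 0 := by ring
      rw [e1, e2, Real.rpow_zero, mul_one,
        show (2:ℝ) = ((2:ℕ):ℝ) by norm_num, Real.rpow_natCast]
    have hDval : D = α ^ (-(2 * α) / q) * q ^ 2 * L ^ (2 / q) := by
      rw [hD, hK, Real.mul_rpow (div_pos hα0 hq).le (Real.rpow_pos_of_pos hLq _).le,
        Real.div_rpow hα0.le hq.le, ← Real.rpow_mul hLq.le,
        Real.mul_rpow hL.le hq.le]
      have e1 : -α⁻¹ * -θ = 2 / q := by rw [hθ]; field_simp; try ring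
      rw [e1, Real.rpow_neg hq.le]
      have e2 : q ^ θ * q ^ (2 / q) = q ^ 2 := by
        rw [← Real.rpow_add hq]
        have e2' : θ + 2 / q = 2 := by rw [hθ, hqdef]; field_simp; try ring
        rw [e2', show (2:ℝ) = ((2:ℕ):ℝ) by norm_num, Real.rpow_natCast]
      have e3 : -θ = -(2 * α) / q := by rw [hθ]; ring
      have e4 : α ^ (-θ) / (q ^ θ)⁻¹ = α ^ (-θ) * q ^ θ := by
        rw [div_eq_mul_inv, inv_inv]
      rw [e4, e3]
      linear_combination α ^ (-(2 * α) / q) * L ^ (2 / q) * e2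
    have hK1θ : K ^ (1 - θ) = D * K := by
      rw [hD, show (1 - θ) = -θ + 1 by ring, Real.rpow_add hKpos, Real.rpow_one]
    have hstep : θ * P₁ ≤ (θ * D) * G := by
      have e : θ * P₁ = (θ * D) * (K * c ^ p) := by rw [hP₁, hK1θ]; ring
      rw [e]
      exact mul_le_mul_of_nonneg_left hKc (by positivity)
    have hAeq : θ * D = 2 * α ^ ((1 - α) / q) * L ^ (2 / q) * q := by
      rw [hDval, hθ]
      have eA : α ^ ((1 - α) / q) = α * α ^ (-(2 * α) / q) := by
        rw [show (1 - α) / q = 1 + -(2 * α) / q by rw [hqdef]; field_simp; ring,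
          Real.rpow_add hα0, Real.rpow_one]
      rw [eA]
      field_simp
    have hBeq : (1 - θ) * D = α ^ (-(2 * α) / q) * L ^ (2 / q) * (1 - α ^ 2) := by
      rw [hDval, hθ, hqdef]
      field_simp
      ring
    have amgm' : c ^ 2 ≤ θ * P₁ + (1 - θ) * D := by rw [← hgeom]; exact amgm
    calc c ^ 2 ≤ θ * P₁ + (1 - θ) * D := amgm'
      _ ≤ (θ * D) * G + (1 - θ) * D := by linarith [hstep]
      _ = _ := by rw [hAeq, hBeq]


set_option maxHeartbeats 8000000 in
/-- Lemma 5 (pathwise bounds for the iterates): for any sample sequence, with `η_t ≤ 1/(Aκ²)`,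
`‖f_{t+1} - f_H‖² ≤ C₁ ∑_{k=0}^t η_k` and `‖f_{t+1}‖² ≤ C₁ ∑_{k=1}^t η_k` (where `η₀ := 1`);
if moreover the step sizes are nonincreasing, then
`∑_{k=1}^t η_k² φ(y_k, f_k(x_k)) ≤ η₁‖f_H‖² + C₂ ∑_{k=1}^t η_k²`. -/
theorem pathwise_iterate_bounds
    {X : Type*} [MeasurableSpace X] {Y : Set ℝ}
    {H : Type*} [NormedAddCommGroup H] [InnerProductSpace ℝ H] [CompleteSpace H]
    [MeasurableSpace H] [BorelSpace H] [SecondCountableTopology H]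
    (K : X → H) (hKmeas : Measurable K)
    (κ : ℝ) (hκ : ∀ x : X, ‖K x‖ ≤ κ)
    (L α : ℝ) (hL : 0 < L) (hα : α ∈ Set.Ioc (0 : ℝ) 1)
    (φ φ' : ℝ → ℝ → ℝ)
    (hφmeas : Measurable fun p : ℝ × ℝ => φ p.1 p.2)
    (hφ'meas : Measurable fun p : ℝ × ℝ => φ' p.1 p.2)
    (hφnonneg : ∀ y ∈ Y, ∀ s : ℝ, 0 ≤ φ y s)
    (hφconv : ∀ y ∈ Y, ConvexOn ℝ Set.univ (φ y))
    (hφderiv : ∀ y ∈ Y, ∀ s : ℝ, HasDerivAt (φ y) (φ' y s) s)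
    (hφholder : ∀ y ∈ Y, ∀ s t : ℝ, |φ' y s - φ' y t| ≤ L * |s - t| ^ α)
    (ρ : Measure (X × Y)) [IsProbabilityMeasure ρ]
    (E : H → ℝ) (hE : E = fun g : H => ∫ z : X × Y, φ (z.2 : ℝ) ⟪g, K z.1⟫ ∂ρ)
    (hEint : ∀ g : H, Integrable (fun z : X × Y => φ (z.2 : ℝ) ⟪g, K z.1⟫) ρ)
    (hgint : ∀ g : H, Integrable (fun z : X × Y => φ' (z.2 : ℝ) ⟪g, K z.1⟫ • K z.1) ρ)
    (fH : H) (hmin : ∀ g : H, E fH ≤ E g)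
    (hgradH : (∫ z : X × Y, φ' (z.2 : ℝ) ⟪fH, K z.1⟫ • K z.1 ∂ρ) = 0)
    (M0 MH : ℝ) (hM0 : ∀ z : X × Y, φ (z.2 : ℝ) 0 ≤ M0)
    (hMH : ∀ z : X × Y, φ (z.2 : ℝ) ⟪fH, K z.1⟫ ≤ MH)
    (η : ℕ → ℝ) (hηpos : ∀ t, 0 < η t)
    (zs : ℕ → X × Y) (f : ℕ → H) (hf1 : f 1 = 0)
    (hfrec : ∀ t, 1 ≤ t →
      f (t + 1) = f t - (η t * φ' (((zs t).2 : Y) : ℝ) ⟪f t, K (zs t).1⟫) • K (zs t).1)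
    (A B C₁ C₂ : ℝ)
    (hA : A = 2 * α ^ ((1 - α) / (1 + α)) * L ^ (2 / (1 + α)) * (1 + α))
    (hB : B = α ^ (-(2 * α) / (1 + α)) * L ^ (2 / (1 + α)) * (1 - α ^ 2))
    (hC₁ : C₁ = ‖fH‖ ^ 2 + B / A + 2 * max M0 MH)
    (hC₂ : C₂ = 2 * MH + η 1 * κ ^ 2 * B)
    (hηA : ∀ t : ℕ, 1 ≤ t → η t ≤ 1 / (A * κ ^ 2)) :
    (∀ t : ℕ, 1 ≤ t →
        ‖f (t + 1) - fH‖ ^ 2 ≤ C₁ * (1 + ∑ k ∈ Finset.Icc 1 t, η k) ∧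
          ‖f (t + 1)‖ ^ 2 ≤ C₁ * ∑ k ∈ Finset.Icc 1 t, η k) ∧
      ((∀ t : ℕ, 1 ≤ t → η (t + 1) ≤ η t) → ∀ t : ℕ, 1 ≤ t →
        (∑ k ∈ Finset.Icc 1 t, η k ^ 2 * φ (((zs k).2 : Y) : ℝ) ⟪f k, K (zs k).1⟫)
          ≤ η 1 * ‖fH‖ ^ 2 + C₂ * ∑ k ∈ Finset.Icc 1 t, η k ^ 2) := by
    -- MAIN PROOF BODY
  have hα0 : 0 < α := hα.1
  have hα1 : α ≤ 1 := hα.2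
  have hq : (0:ℝ) < 1 + α := by linarith
  have hne : Nonempty (X × Y) := by
    by_contra hcon
    rw [not_nonempty_iff] at hcon
    have h1 : ρ Set.univ = 1 := measure_univ
    rw [Set.univ_eq_empty_iff.mpr hcon, measure_empty] at h1
    exact zero_ne_one h1
  have z₀ : X × Y := Classical.arbitrary _
  have hM0nn : 0 ≤ M0 := le_trans (hφnonneg _ z₀.2.2 0) (hM0 z₀)
  have hMHnn : 0 ≤ MH := le_trans (hφnonneg _ z₀.2.2 _) (hMH z₀)
  have hMmax : 0 ≤ max M0 MH := le_trans hM0nn (le_max_left _ _)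
  have hrp1 : (0:ℝ) < α ^ ((1 - α) / (1 + α)) := Real.rpow_pos_of_pos hα0 _
  have hrp2 : (0:ℝ) < L ^ (2 / (1 + α)) := Real.rpow_pos_of_pos hL _
  have hrp3 : (0:ℝ) < α ^ (-(2 * α) / (1 + α)) := Real.rpow_pos_of_pos hα0 _
  have hApos : 0 < A := by
    rw [hA]; exact mul_pos (mul_pos (mul_pos two_pos hrp1) hrp2) hq
  have hBnn : 0 ≤ B := by
    rw [hB]
    exact mul_nonneg (mul_nonneg hrp3.le hrp2.le) (by nlinarith)
  have hκ0 : 0 ≤ κ := le_trans (norm_nonneg _) (hκ z₀.1)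
  have hκpos : 0 < κ := by
    rcases hκ0.eq_or_lt with hk0 | h
    · exfalso
      have h1 := hηA 1 le_rfl
      rw [← hk0] at h1
      norm_num at h1
      linarith [hηpos 1]
    · exact h
  have hηAκ : ∀ t : ℕ, 1 ≤ t → η t * (A * κ ^ 2) ≤ 1 := by
    intro t ht
    have hpos : 0 < A * κ ^ 2 := by positivity
    exact (le_div_iff₀ hpos).mp (hηA t ht)
  -- tangent line inequality
  have htan : ∀ y ∈ Y, ∀ a b : ℝ, φ y a + φ' y a * (b - a) ≤ φ y b := fun y hy =>
    tangent_line_le (hφconv y hy) (hφderiv y hy)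
  -- self-bounding property of the derivative
  have hgb : ∀ y ∈ Y, ∀ s : ℝ, (φ' y s) ^ 2 ≤ A * φ y s + B := by
    intro y hy s
    have key : ∀ r : ℝ, 0 ≤ r → |φ' y s| * r ≤ φ y s + L * r ^ (1 + α) := by
      intro r hr
      rcases eq_or_lt_of_le hr with hr0 | hrpos
      · rw [← hr0, Real.zero_rpow (ne_of_gt hq)]
        simpa using hφnonneg y hy s
      · obtain ⟨u, hu, hgu⟩ : ∃ u : ℝ, |u| = r ∧ φ' y s * u = |φ' y s| * r := by
          by_cases hsign : 0 ≤ φ' y s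
          · exact ⟨r, abs_of_nonneg hrpos.le, by rw [abs_of_nonneg hsign]⟩
          · exact ⟨-r, by rw [abs_neg, abs_of_nonneg hrpos.le], by
              rw [abs_of_neg (lt_of_not_ge hsign)]; ring⟩
        have htan' := htan y hy (s - u) s
        have e : s - (s - u) = u := by ring
        rw [e] at htan'
        have h1 : φ' y (s - u) * u ≤ φ y s := by
          have := hφnonneg y hy (s - u); linarith
        have h3 := hφholder y hy s (s - u)
        rw [e, hu] at h3
        have h4 : (φ' y s - φ' y (s - u)) * u ≤ L * r ^ α * r := by
          calc (φ' y s - φ' y (s - u)) * u ≤ |(φ' y s - φ' y (s - u)) * u| := le_abs_self _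
            _ = |φ' y s - φ' y (s - u)| * |u| := abs_mul _ _
            _ ≤ (L * r ^ α) * r := by rw [hu]; exact mul_le_mul_of_nonneg_right h3 hrpos.le
        have h5 : L * r ^ α * r = L * r ^ (1 + α) := by
          rw [Real.rpow_add hrpos, Real.rpow_one]; ring
        rw [← hgu]
        nlinarith [h1, h4]
    have h6 := deriv_sq_le_aux hL hα0 hα1 (abs_nonneg (φ' y s)) (hφnonneg y hy s) key
    rw [sq_abs] at h6
    rw [hA, hB]
    exact h6
  -- one-step inequality
  have step : ∀ t : ℕ, 1 ≤ t → ∀ w : H,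
      ‖f (t + 1) - w‖ ^ 2 ≤ ‖f t - w‖ ^ 2
        - η t * φ ((zs t).2 : ℝ) ⟪f t, K (zs t).1⟫
        + 2 * η t * φ ((zs t).2 : ℝ) ⟪w, K (zs t).1⟫
        + η t ^ 2 * κ ^ 2 * B := by
    intro t ht w
    have hy : ((zs t).2 : ℝ) ∈ Y := (zs t).2.2
    set x := (zs t).1 with hx
    set y : ℝ := ((zs t).2 : ℝ) with hyv
    set s : ℝ := ⟪f t, K x⟫ with hs
    set G : ℝ := φ' y s with hGdef
    have hexp : ‖f (t + 1) - w‖ ^ 2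
        = ‖f t - w‖ ^ 2 - 2 * (η t * G) * (s - ⟪w, K x⟫) + (η t * G) ^ 2 * ‖K x‖ ^ 2 := by
      rw [hfrec t ht]
      have e1 : f t - (η t * G) • K x - w = (f t - w) - (η t * G) • K x := by
        rw [sub_right_comm]
      rw [e1, norm_sub_sq_real, real_inner_smul_right, inner_sub_left, norm_smul,
        Real.norm_eq_abs, mul_pow, sq_abs]
      rw [hs]
      ring
    have hconv1 : φ y s - φ y ⟪w, K x⟫ ≤ G * (s - ⟪w, K x⟫) := by
      have h0 := htan y hy s ⟪w, K x⟫
      nlinarith [h0]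
    have hKx2 : ‖K x‖ ^ 2 ≤ κ ^ 2 := by nlinarith [hκ x, norm_nonneg (K x)]
    have hG2 : G ^ 2 ≤ A * φ y s + B := hgb y hy s
    have hφs : 0 ≤ φ y s := hφnonneg y hy s
    have hη := hηpos t
    have hηA2 : η t * (A * κ ^ 2) ≤ 1 := hηAκ t ht
    rw [hexp]
    have h3 : 2 * η t * (φ y s - φ y ⟪w, K x⟫) ≤ 2 * (η t * G) * (s - ⟪w, K x⟫) := by
      have h0 := mul_le_mul_of_nonneg_left hconv1 (by positivity : (0:ℝ) ≤ 2 * η t)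
      nlinarith [h0]
    have hb1 : (η t * G) ^ 2 * ‖K x‖ ^ 2 ≤ (η t * G) ^ 2 * κ ^ 2 :=
      mul_le_mul_of_nonneg_left hKx2 (sq_nonneg _)
    have hb2 : η t ^ 2 * G ^ 2 * κ ^ 2 ≤ η t ^ 2 * (A * φ y s + B) * κ ^ 2 :=
      mul_le_mul_of_nonneg_right (mul_le_mul_of_nonneg_left hG2 (sq_nonneg (η t))) (sq_nonneg κ)
    have hb3 : η t ^ 2 * (A * κ ^ 2) * φ y s ≤ η t * φ y s := by
      have h0 := mul_le_mul_of_nonneg_left hηA2 (mul_nonneg hη.le hφs)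
      nlinarith [h0]
    nlinarith [h3, hb1, hb2, hb3]
  -- bound on the B-term
  have hBA : ∀ t : ℕ, 1 ≤ t → η t ^ 2 * κ ^ 2 * B ≤ η t * (B / A) := by
    intro t ht
    have hη := hηpos t
    have h1 : η t * κ ^ 2 * A ≤ 1 := by nlinarith [hηAκ t ht]
    have h2 : η t * κ ^ 2 ≤ 1 / A := by rw [le_div_iff₀ hApos]; linarith
    have h0 := mul_le_mul_of_nonneg_left h2 (mul_nonneg hη.le hBnn)
    have e : η t * (B / A) = η t * B * (1 / A) := by ring
    nlinarith [h0]
  -- contraction step with constants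
  have stepC : ∀ t : ℕ, 1 ≤ t → ∀ w : H,
      φ ((zs t).2 : ℝ) ⟪w, K (zs t).1⟫ ≤ max M0 MH →
      ‖f (t + 1) - w‖ ^ 2 ≤ ‖f t - w‖ ^ 2 + η t * (2 * max M0 MH + B / A) := by
    intro t ht w hw
    have hs := step t ht w
    have hη := hηpos t
    have hφs : 0 ≤ φ ((zs t).2 : ℝ) ⟪f t, K (zs t).1⟫ := hφnonneg _ (zs t).2.2 _
    have hB' := hBA t ht
    have h2 : 2 * η t * φ ((zs t).2 : ℝ) ⟪w, K (zs t).1⟫ ≤ 2 * η t * max M0 MH :=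
      mul_le_mul_of_nonneg_left hw (by positivity)
    nlinarith [hs, h2, hB', mul_nonneg hη.le hφs]
  -- accumulated bound
  have ind1 : ∀ w : H, (∀ t : ℕ, 1 ≤ t → φ ((zs t).2 : ℝ) ⟪w, K (zs t).1⟫ ≤ max M0 MH) →
      ∀ t : ℕ, 1 ≤ t → ‖f (t + 1) - w‖ ^ 2
        ≤ ‖f 1 - w‖ ^ 2 + (2 * max M0 MH + B / A) * ∑ k ∈ Finset.Icc 1 t, η k := by
    intro w hw t ht
    induction t, ht using Nat.le_induction with
    | base =>
      rw [Finset.Icc_self, Finset.sum_singleton]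
      have := stepC 1 le_rfl w (hw 1 le_rfl)
      nlinarith [this]
    | succ n hn ih =>
      rw [Finset.sum_Icc_succ_top (by omega : 1 ≤ n + 1)]
      have := stepC (n + 1) (by omega) w (hw (n + 1) (by omega))
      nlinarith [this, ih]
  have hsumnn : ∀ t : ℕ, 0 ≤ ∑ k ∈ Finset.Icc 1 t, η k :=
    fun t => Finset.sum_nonneg (fun i _ => (hηpos i).le)
  have hC1a : ‖fH‖ ^ 2 ≤ C₁ := by
    rw [hC₁]
    have : 0 ≤ B / A := div_nonneg hBnn hApos.le
    linarith
  have hC1b : 2 * max M0 MH + B / A ≤ C₁ := by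
    rw [hC₁]
    have h0 : (0:ℝ) ≤ ‖fH‖ ^ 2 := sq_nonneg _
    linarith
  refine ⟨?_, ?_⟩
  · intro t ht
    constructor
    · have h1 := ind1 fH (fun k hk => le_trans (hMH (zs k)) (le_max_right _ _)) t ht
      rw [hf1, zero_sub, norm_neg] at h1
      have h2 : (2 * max M0 MH + B / A) * ∑ k ∈ Finset.Icc 1 t, η k
          ≤ C₁ * ∑ k ∈ Finset.Icc 1 t, η k :=
        mul_le_mul_of_nonneg_right hC1b (hsumnn t)
      nlinarith [h1, h2]
    · have hw0 : ∀ k : ℕ, 1 ≤ k → φ ((zs k).2 : ℝ) ⟪(0 : H), K (zs k).1⟫ ≤ max M0 MH := by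
        intro k hk
        rw [inner_zero_left]
        exact le_trans (hM0 (zs k)) (le_max_left _ _)
      have h1 := ind1 0 hw0 t ht
      rw [hf1, sub_zero, sub_zero, norm_zero] at h1
      have h2 : (2 * max M0 MH + B / A) * ∑ k ∈ Finset.Icc 1 t, η k
          ≤ C₁ * ∑ k ∈ Finset.Icc 1 t, η k :=
        mul_le_mul_of_nonneg_right hC1b (hsumnn t)
      nlinarith [h1, h2]
  · intro hmono t ht
    have hη1 : ∀ k : ℕ, 1 ≤ k → η k ≤ η 1 := by
      intro k hk
      induction k, hk using Nat.le_induction with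
      | base => exact le_rfl
      | succ n hn ih => exact le_trans (hmono n hn) ih
    have key3 : ∀ k : ℕ, 1 ≤ k →
        η k ^ 2 * φ ((zs k).2 : ℝ) ⟪f k, K (zs k).1⟫
          ≤ η k * (‖f k - fH‖ ^ 2 - ‖f (k + 1) - fH‖ ^ 2) + η k ^ 2 * C₂ := by
      intro k hk
      have hs := step k hk fH
      have hMHk : φ ((zs k).2 : ℝ) ⟪fH, K (zs k).1⟫ ≤ MH := hMH (zs k)
      have hη := hηpos k
      have hκ2B : 0 ≤ κ ^ 2 * B := mul_nonneg (sq_nonneg κ) hBnn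
      have h1 : η k * φ ((zs k).2 : ℝ) ⟪f k, K (zs k).1⟫
          ≤ (‖f k - fH‖ ^ 2 - ‖f (k + 1) - fH‖ ^ 2) + 2 * η k * MH + η k ^ 2 * (κ ^ 2 * B) := by
        have h2 := mul_le_mul_of_nonneg_left hMHk (by positivity : (0:ℝ) ≤ 2 * η k)
        nlinarith [hs, h2]
      have hT1 := mul_le_mul_of_nonneg_left h1 hη.le
      have hT2 := mul_le_mul_of_nonneg_right (hη1 k hk)
        (mul_nonneg (sq_nonneg (η k)) hκ2B)
      rw [hC₂]
      nlinarith [hT1, hT2]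
    have abel : ∀ t : ℕ, 1 ≤ t →
        (∑ k ∈ Finset.Icc 1 t, η k ^ 2 * φ ((zs k).2 : ℝ) ⟪f k, K (zs k).1⟫)
          ≤ η 1 * ‖f 1 - fH‖ ^ 2 - η t * ‖f (t + 1) - fH‖ ^ 2
            + C₂ * ∑ k ∈ Finset.Icc 1 t, η k ^ 2 := by
      intro t ht
      induction t, ht using Nat.le_induction with
      | base =>
        simp only [Finset.Icc_self, Finset.sum_singleton]
        have := key3 1 le_rfl
        nlinarith [this]
      | succ n hn ih =>
        rw [Finset.sum_Icc_succ_top (by omega : 1 ≤ n + 1),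
          Finset.sum_Icc_succ_top (by omega : 1 ≤ n + 1)]
        have hk := key3 (n + 1) (by omega)
        have hmono' := hmono n hn
        have ha : (0:ℝ) ≤ ‖f (n + 1) - fH‖ ^ 2 := sq_nonneg _
        have hmm := mul_le_mul_of_nonneg_right hmono' ha
        nlinarith [ih, hk, hmm]
    have h1 := abel t ht
    rw [hf1, zero_sub, norm_neg] at h1
    have h2 : 0 ≤ η t * ‖f (t + 1) - fH‖ ^ 2 := mul_nonneg (hηpos t).le (sq_nonneg _)
    linarith
end
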